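/- arXiv:1310.5202 — 3 statements merged into one kernel-verified Lean document; each statement's English description precedes it below -/
import Mathlib

section
/- For any pair of hierarchies 𝒜, ℬ over a finite set S (degenerate or not), the crossing dissimilarity is bounded above by the cluster-cardinality distance: d_CM(𝒜,ℬ) ≤ d_CC(𝒜,ℬ). -/
open scoped Classical

namespace TreeDist

variable {α : Type*} [DecidableEq α]

/-- Two finite sets are compatible if they are disjoint or nested. -/
def Compatible (A B : Finset α) : Prop :=
  A ∩ B = ∅ ∨ A ⊆ B ∨ B ⊆ A

/-- A hierarchy over `S`: a laminar family of nonempty subsets of `S`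
containing `S` and all singletons. -/
def IsHierarchy (S : Finset α) (F : Finset (Finset α)) : Prop :=
  (∀ A ∈ F, A ⊆ S ∧ A.Nonempty) ∧
  (∀ A ∈ F, ∀ B ∈ F, Compatible A B) ∧
  S ∈ F ∧ ∀ i ∈ S, ({i} : Finset α) ∈ F

/-- A nondegenerate (binary) hierarchy: a hierarchy with `2|S| - 1` clusters,
equivalently a maximal laminar family. -/
def Nondeg (S : Finset α) (F : Finset (Finset α)) : Prop :=
  IsHierarchy S F ∧ F.card = 2 * S.card - 1

/-- `P` is the parent of `I` in the family `F`: the smallest cluster of `F`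
strictly containing `I`. -/
def IsParent (F : Finset (Finset α)) (I P : Finset α) : Prop :=
  P ∈ F ∧ I ⊂ P ∧ ∀ Q ∈ F, I ⊂ Q → P ⊆ Q

/-- `G` is the result of an NNI move on `F` at some grandchild `C`:
`G = (F \ {parent C}) ∪ {grandparent C \ C}`. -/
def IsNNIMove (F G : Finset (Finset α)) : Prop :=
  ∃ C P GP, C ∈ F ∧ IsParent F C P ∧ IsParent F P GP ∧
    G = insert (GP \ C) (F.erase P)

/-- Restriction of a family of sets to `K`: `{A ∩ K : A ∈ F, A ∩ K ≠ ∅}`. -/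
noncomputable def restrictFam (F : Finset (Finset α)) (K : Finset α) : Finset (Finset α) :=
  (F.image (· ∩ K)).filter fun A => A.Nonempty

/-- The cardinality of the smallest common ancestor of `i` and `j` in `F`, i.e. the
minimum cardinality of a cluster of `F` containing both `i` and `j`. -/
noncomputable def caCard (F : Finset (Finset α)) (i j : α) : ℕ :=
  sInf {n | ∃ A ∈ F, i ∈ A ∧ j ∈ A ∧ A.card = n}

/-- Ultrametric representation `U(F)_{ij} = |ca(i,j)| - 1`. -/
noncomputable def Umat (F : Finset (Finset α)) (i j : α) : ℤ :=
  (caCard F i j : ℤ) - 1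

/-- Cluster-cardinality distance `d_CC = (1/2) Σ_{i,j ∈ S} |U(F)_{ij} - U(G)_{ij}|`. -/
noncomputable def dCC (S : Finset α) (F G : Finset (Finset α)) : ℚ :=
  (1 / 2) * ∑ i ∈ S, ∑ j ∈ S, |((Umat F i j : ℚ)) - ((Umat G i j : ℚ))|

/-- Robinson–Foulds distance: half the size of the symmetric difference of cluster sets. -/
noncomputable def dRF (F G : Finset (Finset α)) : ℚ :=
  (((F \ G) ∪ (G \ F)).card : ℚ) / 2

/-- Crossing dissimilarity: the number of incompatible pairs of clusters. -/
noncomputable def dCM (F G : Finset (Finset α)) : ℕ :=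
  ((F ×ˢ G).filter fun p => ¬ Compatible p.1 p.2).card

/-- Depth of a cluster: the number of its strict ancestors in `F`. -/
noncomputable def depth (F : Finset (Finset α)) (I : Finset α) : ℕ :=
  (F.filter fun J => I ⊂ J).card

/-- The children of `I` in `F`: the clusters of `F` whose parent is `I`. -/
noncomputable def children (F : Finset (Finset α)) (I : Finset α) : Finset (Finset α) :=
  F.filter fun C => IsParent F C I

/-- `η_{F,G}(I,J)`: the number of members of `(children I)|_J` incompatible with
the family `(children J)|_I`. -/
noncomputable def eta (F G : Finset (Finset α)) (I J : Finset α) : ℕ :=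
  ((restrictFam (children F I) J).filter
    fun A => ∃ B ∈ restrictFam (children G J) I, ¬ Compatible A B).card

/-- `θ(x) = (x² + x)/2`. -/
def theta (x : ℕ) : ℚ := ((x : ℚ) ^ 2 + x) / 2

/-- Closed-form NNI navigation distance `d_Nav(F,G) = Σ_{I∈F, J∈G} θ(η_{F,G}(I,J))`. -/
noncomputable def dNav (F G : Finset (Finset α)) : ℚ :=
  ∑ I ∈ F, ∑ J ∈ G, theta (eta F G I J)


section AuxLem

variable {S : Finset α} {F G : Finset (Finset α)}

lemma compat_nested {A B : Finset α} (h : Compatible A B) {x : α}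
    (hxA : x ∈ A) (hxB : x ∈ B) : A ⊆ B ∨ B ⊆ A := by
  rcases h with h | h | h
  · exact absurd h (Finset.ne_empty_of_mem (Finset.mem_inter.mpr ⟨hxA, hxB⟩))
  · exact Or.inl h
  · exact Or.inr h

lemma nested_subset (hlam : ∀ A ∈ F, ∀ B ∈ F, Compatible A B) {A B : Finset α}
    (hA : A ∈ F) (hB : B ∈ F) {x : α} (hxA : x ∈ A) (hxB : x ∈ B)
    (hcard : A.card ≤ B.card) : A ⊆ B := by
  rcases compat_nested (hlam A hA B hB) hxA hxB with h | h
  · exact h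
  · rw [Finset.eq_of_subset_of_card_le h hcard]

lemma nested_eq (hlam : ∀ A ∈ F, ∀ B ∈ F, Compatible A B) {A B : Finset α}
    (hA : A ∈ F) (hB : B ∈ F) {x : α} (hxA : x ∈ A) (hxB : x ∈ B)
    (hcard : A.card = B.card) : A = B :=
  Finset.Subset.antisymm (nested_subset hlam hA hB hxA hxB hcard.le)
    (nested_subset hlam hB hA hxB hxA hcard.ge)

lemma caCard_comm (F : Finset (Finset α)) (x y : α) : caCard F x y = caCard F y x := by
  unfold caCard
  congr 1
  ext n
  constructor <;> rintro ⟨A, hA, h1, h2, h3⟩ <;> exact ⟨A, hA, h2, h1, h3⟩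

lemma caCard_spec (hF : IsHierarchy S F) {x y : α} (hx : x ∈ S) (hy : y ∈ S) :
    ∃ M ∈ F, x ∈ M ∧ y ∈ M ∧ M.card = caCard F x y ∧
      ∀ A ∈ F, x ∈ A → y ∈ A → M ⊆ A := by
  have hne : {n | ∃ A ∈ F, x ∈ A ∧ y ∈ A ∧ A.card = n}.Nonempty :=
    ⟨S.card, S, hF.2.2.1, hx, hy, rfl⟩
  obtain ⟨M, hM, hxM, hyM, hcard⟩ := Nat.sInf_mem hne
  refine ⟨M, hM, hxM, hyM, hcard, ?_⟩
  intro A hA hxA hyA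
  have hle : caCard F x y ≤ A.card := Nat.sInf_le ⟨A, hA, hxA, hyA, rfl⟩
  exact nested_subset hF.2.1 hM hA hxM hxA (hcard.trans_le hle)

lemma caCard_eq_of_min (hF : IsHierarchy S F) {I : Finset α} (hI : I ∈ F) {a b : α}
    (ha : a ∈ I) (hb : b ∈ I) (hmin : ∀ A ∈ F, a ∈ A → b ∈ A → I ⊆ A) :
    caCard F a b = I.card := by
  have haS : a ∈ S := (hF.1 I hI).1 ha
  have hbS : b ∈ S := (hF.1 I hI).1 hb
  obtain ⟨M, hM, haM, hbM, hMc, hMmin⟩ := caCard_spec hF haS hbS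
  have hMI : M = I := Finset.Subset.antisymm (hMmin I hI ha hb) (hmin M hM haM hbM)
  rw [← hMc, hMI]

lemma exists_witness (hF : IsHierarchy S F) {I J : Finset α} (hI : I ∈ F)
    (hab : (I ∩ J).Nonempty) (hIJ : ¬ I ⊆ J) :
    ∃ a ∈ I ∩ J, ∃ b ∈ I \ J, ∀ A ∈ F, a ∈ A → b ∈ A → I ⊆ A := by
  by_contra hcon
  push_neg at hcon
  obtain ⟨a0, ha0⟩ := hab
  obtain ⟨b0, hb0I, hb0J⟩ := Finset.not_subset.mp hIJ
  have ha0I : a0 ∈ I := (Finset.mem_inter.mp ha0).1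
  have ha0J : a0 ∈ J := (Finset.mem_inter.mp ha0).2
  have hb0 : b0 ∈ I \ J := Finset.mem_sdiff.mpr ⟨hb0I, hb0J⟩
  have hsub : I ⊆ S := (hF.1 I hI).1
  have hne : a0 ≠ b0 := fun h => hb0J (h ▸ ha0J)
  -- maximal proper subcluster through each point
  have key : ∀ c : α, ∃ Bc : Finset α, c ∈ I →
      (Bc ∈ F ∧ c ∈ Bc ∧ Bc ⊂ I ∧ ∀ A ∈ F, c ∈ A → A ⊂ I → A.card ≤ Bc.card) := by
    intro c
    by_cases hc : c ∈ I
    · have hsing : ({c} : Finset α) ∈ F := hF.2.2.2 c (hsub hc)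
      have hss : ({c} : Finset α) ⊂ I := by
        rw [Finset.ssubset_iff_subset_ne]
        refine ⟨Finset.singleton_subset_iff.mpr hc, fun h => ?_⟩
        have h1 : a0 ∈ ({c} : Finset α) := h ▸ ha0I
        have h2 : b0 ∈ ({c} : Finset α) := h ▸ hb0I
        exact hne ((Finset.mem_singleton.mp h1).trans (Finset.mem_singleton.mp h2).symm)
      have hnefc : (F.filter fun A => c ∈ A ∧ A ⊂ I).Nonempty :=
        ⟨{c}, Finset.mem_filter.mpr ⟨hsing, Finset.mem_singleton_self c, hss⟩⟩
      obtain ⟨Bc, hBc, hmax⟩ := Finset.exists_max_image _ Finset.card hnefc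
      rw [Finset.mem_filter] at hBc
      refine ⟨Bc, fun _ => ⟨hBc.1, hBc.2.1, hBc.2.2, fun A hA hcA hAI => ?_⟩⟩
      exact hmax A (Finset.mem_filter.mpr ⟨hA, hcA, hAI⟩)
    · exact ⟨∅, fun h => absurd h hc⟩
  choose Bf hBf using key
  -- pair lemma
  have key2 : ∀ c ∈ I, ∀ d ∈ I, (∃ A ∈ F, c ∈ A ∧ d ∈ A ∧ ¬ I ⊆ A) → Bf c = Bf d := by
    intro c hc d hd ⟨A, hA, hcA, hdA, hnIA⟩
    obtain ⟨hBcF, hcBc, hBcI, hBcmax⟩ := hBf c hc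
    obtain ⟨hBdF, hdBd, hBdI, hBdmax⟩ := hBf d hd
    have hAI : A ⊂ I := by
      rw [Finset.ssubset_iff_subset_ne]
      rcases compat_nested (hF.2.1 A hA I hI) hcA hc with h | h
      · exact ⟨h, fun e => hnIA (e ▸ Finset.Subset.refl A)⟩
      · exact absurd h hnIA
    have hABc : A ⊆ Bf c :=
      nested_subset hF.2.1 hA hBcF hcA hcBc (hBcmax A hA hcA hAI)
    have hdBc : d ∈ Bf c := hABc hdA
    have hBcBd : Bf c ⊆ Bf d :=
      nested_subset hF.2.1 hBcF hBdF hdBc hdBd (hBdmax (Bf c) hBcF hdBc hBcI)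
    have hcBd : c ∈ Bf d := hBcBd hcBc
    exact Finset.eq_of_subset_of_card_le hBcBd (hBcmax (Bf d) hBdF hcBd hBdI) |>.symm ▸ rfl
  have hall : ∀ c ∈ I, Bf c = Bf a0 := by
    have hba : Bf a0 = Bf b0 := by
      obtain ⟨A, hA, hmemA⟩ := hcon a0 ha0 b0 hb0
      exact key2 a0 ha0I b0 hb0I ⟨A, hA, hmemA⟩
    intro c hc
    by_cases hcJ : c ∈ J
    · obtain ⟨A, hA, hmemA⟩ := hcon c (Finset.mem_inter.mpr ⟨hc, hcJ⟩) b0 hb0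
      rw [key2 c hc b0 hb0I ⟨A, hA, hmemA⟩, ← hba]
    · obtain ⟨A, hA, h1, h2, h3⟩ := hcon a0 ha0 c (Finset.mem_sdiff.mpr ⟨hc, hcJ⟩)
      exact key2 c hc a0 ha0I ⟨A, hA, h2, h1, h3⟩
  obtain ⟨_, _, hBa0I, _⟩ := hBf a0 ha0I
  rw [Finset.ssubset_iff_subset_ne] at hBa0I
  exact hBa0I.2 (Finset.Subset.antisymm hBa0I.1
    (fun c hc => hall c hc ▸ (hBf c hc).2.1))

lemma chain_card_le {C : Finset (Finset α)}
    (hc : ∀ A ∈ C, ∀ B ∈ C, A ⊆ B ∨ B ⊆ A) {m K : ℕ}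
    (hmK : ∀ A ∈ C, m ≤ A.card ∧ A.card ≤ K) (hne : C.Nonempty) :
    C.card + m ≤ K + 1 := by
  have hinj : Set.InjOn Finset.card (C : Set (Finset α)) := by
    intro A hA B hB hAB
    rcases hc A hA B hB with h | h
    · exact Finset.eq_of_subset_of_card_le h hAB.ge
    · exact (Finset.eq_of_subset_of_card_le h hAB.le).symm
  have hmaps : ∀ A ∈ C, A.card ∈ Finset.Icc m K :=
    fun A hA => Finset.mem_Icc.mpr (hmK A hA)
  have h1 := Finset.card_le_card_of_injOn Finset.card hmaps hinj
  rw [Nat.card_Icc] at h1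
  obtain ⟨A0, hA0⟩ := hne
  have h2 := hmK A0 hA0
  omega

lemma count_le (hlam : ∀ A ∈ G, ∀ B ∈ G, Compatible A B)
    {x y : α} (hxy : x ≠ y) {Y : Finset α} (hY : Y ∈ G) (hxY : x ∈ Y) (hyY : y ∈ Y)
    {m : ℕ} (hm : 2 ≤ m)
    (hTne : (G.filter fun J => ((x ∈ J ∧ y ∉ J) ∨ (y ∈ J ∧ x ∉ J)) ∧ m ≤ J.card).Nonempty) :
    (G.filter fun J => ((x ∈ J ∧ y ∉ J) ∨ (y ∈ J ∧ x ∉ J)) ∧ m ≤ J.card).card + m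
      ≤ Y.card := by
  set T := G.filter fun J => ((x ∈ J ∧ y ∉ J) ∨ (y ∈ J ∧ x ∉ J)) ∧ m ≤ J.card with hT
  have hTmem : ∀ J ∈ T, J ∈ G ∧ ((x ∈ J ∧ y ∉ J) ∨ (y ∈ J ∧ x ∉ J)) ∧ m ≤ J.card := by
    intro J hJ; rw [hT, Finset.mem_filter] at hJ; exact hJ
  have hssY : ∀ J ∈ T, J ⊂ Y := by
    intro J hJ
    obtain ⟨hJG, hxor, _⟩ := hTmem J hJ
    rw [Finset.ssubset_iff_subset_ne]
    rcases hxor with ⟨h1, h2⟩ | ⟨h1, h2⟩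
    · rcases compat_nested (hlam J hJG Y hY) h1 hxY with h | h
      · exact ⟨h, fun e => h2 (e ▸ hyY)⟩
      · exact absurd (h hyY) h2
    · rcases compat_nested (hlam J hJG Y hY) h1 hyY with h | h
      · exact ⟨h, fun e => h2 (e ▸ hxY)⟩
      · exact absurd (h hxY) h2
  set Tx := T.filter fun J => x ∈ J with hTx
  set Ty := T.filter fun J => x ∉ J with hTy
  have hcards : Tx.card + Ty.card = T.card :=
    Finset.card_filter_add_card_filter_not _
  have hTymem : ∀ J ∈ Ty, y ∈ J ∧ x ∉ J := by
    intro J hJ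
    rw [hTy, Finset.mem_filter] at hJ
    rcases (hTmem J hJ.1).2.1 with h | h
    · exact absurd h.1 hJ.2
    · exact h
  have hTxmem : ∀ J ∈ Tx, x ∈ J ∧ y ∉ J := by
    intro J hJ
    rw [hTx, Finset.mem_filter] at hJ
    rcases (hTmem J hJ.1).2.1 with h | h
    · exact h
    · exact absurd hJ.2 h.2
  have hchx : ∀ A ∈ Tx, ∀ B ∈ Tx, A ⊆ B ∨ B ⊆ A := by
    intro A hA B hB
    have hAT : A ∈ T := (Finset.mem_filter.mp hA).1
    have hBT : B ∈ T := (Finset.mem_filter.mp hB).1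
    exact compat_nested (hlam A (hTmem A hAT).1 B (hTmem B hBT).1)
      (hTxmem A hA).1 (hTxmem B hB).1
  have hchy : ∀ A ∈ Ty, ∀ B ∈ Ty, A ⊆ B ∨ B ⊆ A := by
    intro A hA B hB
    have hAT : A ∈ T := (Finset.mem_filter.mp hA).1
    have hBT : B ∈ T := (Finset.mem_filter.mp hB).1
    exact compat_nested (hlam A (hTmem A hAT).1 B (hTmem B hBT).1)
      (hTymem A hA).1 (hTymem B hB).1
  have hYpos : 1 ≤ Y.card := Finset.card_pos.mpr ⟨x, hxY⟩
  by_cases hTyE : Ty = ∅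
  · have hTy0 : Ty.card = 0 := by rw [hTyE]; rfl
    have hTxne : Tx.Nonempty := by
      rw [← Finset.card_pos]
      have := hTne.card_pos
      omega
    have h1 : Tx.card + m ≤ (Y.card - 1) + 1 := by
      refine chain_card_le hchx (fun A hA => ?_) hTxne
      have hAT : A ∈ T := (Finset.mem_filter.mp hA).1
      have := Finset.card_lt_card (hssY A hAT)
      have := (hTmem A hAT).2.2
      omega
    have : Ty.card = 0 := by rw [hTyE]; rfl
    omega
  · by_cases hTxE : Tx = ∅
    · have hTyne : Ty.Nonempty := Finset.nonempty_iff_ne_empty.mpr hTyE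
      have h1 : Ty.card + m ≤ (Y.card - 1) + 1 := by
        refine chain_card_le hchy (fun A hA => ?_) hTyne
        have hAT : A ∈ T := (Finset.mem_filter.mp hA).1
        have := Finset.card_lt_card (hssY A hAT)
        have := (hTmem A hAT).2.2
        omega
      have : Tx.card = 0 := by rw [hTxE]; rfl
      omega
    · have hTxne : Tx.Nonempty := Finset.nonempty_iff_ne_empty.mpr hTxE
      have hTyne : Ty.Nonempty := Finset.nonempty_iff_ne_empty.mpr hTyE
      obtain ⟨Mx, hMx, hMxmax⟩ := Finset.exists_max_image Tx Finset.card hTxne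
      obtain ⟨My, hMy, hMymax⟩ := Finset.exists_max_image Ty Finset.card hTyne
      have hMxT : Mx ∈ T := (Finset.mem_filter.mp hMx).1
      have hMyT : My ∈ T := (Finset.mem_filter.mp hMy).1
      have hsubx : ∀ A ∈ Tx, A ⊆ Mx := by
        intro A hA
        rcases hchx A hA Mx hMx with h | h
        · exact h
        · rw [Finset.eq_of_subset_of_card_le h (hMxmax A hA)]
      have hsuby : ∀ A ∈ Ty, A ⊆ My := by
        intro A hA
        rcases hchy A hA My hMy with h | h
        · exact h
        · rw [Finset.eq_of_subset_of_card_le h (hMymax A hA)]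
      have hdisj : Disjoint Mx My := by
        rcases hlam Mx (hTmem Mx hMxT).1 My (hTmem My hMyT).1 with h | h | h
        · exact Finset.disjoint_iff_inter_eq_empty.mpr h
        · exact absurd (h (hTxmem Mx hMx).1) (hTymem My hMy).2
        · exact absurd (h (hTymem My hMy).1) (hTxmem Mx hMx).2
      have hMyY : My ⊆ Y := (hssY My hMyT).subset
      have h1 : Tx.card + m ≤ (Y.card - My.card) + 1 := by
        refine chain_card_le hchx (fun A hA => ?_) hTxne
        have hAT : A ∈ T := (Finset.mem_filter.mp hA).1
        refine ⟨(hTmem A hAT).2.2, ?_⟩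
        have hAsub : A ⊆ Y \ My := by
          intro c hcA
          refine Finset.mem_sdiff.mpr ⟨(hssY A hAT).subset hcA, fun hcMy => ?_⟩
          exact (Finset.disjoint_left.mp hdisj) (hsubx A hA hcA) hcMy
        have := Finset.card_le_card hAsub
        rw [Finset.card_sdiff_of_subset hMyY] at this
        exact this
      have h2 : Ty.card + m ≤ My.card + 1 := by
        refine chain_card_le hchy (fun A hA => ?_) hTyne
        exact ⟨(hTmem A (Finset.mem_filter.mp hA).1).2.2,
          Finset.card_le_card (hsuby A hA)⟩
      have h3 := Finset.card_lt_card (hssY My hMyT)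
      have h4 : m ≤ My.card := (hTmem My hMyT).2.2
      omega

end AuxLem

theorem dCM_le_dCC (S : Finset α) (F G : Finset (Finset α))
    (hF : IsHierarchy S F) (hG : IsHierarchy S G) :
    (dCM F G : ℚ) ≤ dCC S F G := by
  classical
  letI : LinearOrder α := linearOrderOfSTO WellOrderingRel
  set w : α × α → ℚ := fun q => |((Umat F q.1 q.2 : ℚ)) - ((Umat G q.1 q.2 : ℚ))| with hw
  set X := (F ×ˢ G).filter fun p => ¬ Compatible p.1 p.2 with hX
  -- basic facts about crossing pairs
  have hXmem : ∀ p ∈ X, p.1 ∈ F ∧ p.2 ∈ G ∧ (p.1 ∩ p.2).Nonempty ∧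
      ¬ p.1 ⊆ p.2 ∧ ¬ p.2 ⊆ p.1 := by
    intro p hp
    rw [hX, Finset.mem_filter, Finset.mem_product] at hp
    obtain ⟨⟨h1, h2⟩, h3⟩ := hp
    rw [Compatible, not_or, not_or] at h3
    exact ⟨h1, h2, Finset.nonempty_iff_ne_empty.mpr h3.1, h3.2⟩
  -- the predicate describing valid charges
  set P : Finset α × Finset α → α × α → Prop := fun p q =>
    q.1 ∈ S ∧ q.2 ∈ S ∧ q.1 < q.2 ∧
    ((q.1 ∈ p.1 ∧ q.2 ∈ p.1 ∧ caCard F q.1 q.2 = p.1.card ∧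
        ((q.1 ∈ p.2 ∧ q.2 ∉ p.2) ∨ (q.2 ∈ p.2 ∧ q.1 ∉ p.2)) ∧ p.1.card ≤ p.2.card)
      ∨ (q.1 ∈ p.2 ∧ q.2 ∈ p.2 ∧ caCard G q.1 q.2 = p.2.card ∧
        ((q.1 ∈ p.1 ∧ q.2 ∉ p.1) ∨ (q.2 ∈ p.1 ∧ q.1 ∉ p.1)) ∧ p.2.card < p.1.card)) with hP
  have hPex : ∀ p ∈ X, ∃ q : α × α, P p q := by
    intro p hp
    obtain ⟨hIF, hJG, hne, hnIJ, hnJI⟩ := hXmem p hp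
    by_cases hc : p.1.card ≤ p.2.card
    · obtain ⟨a, ha, b, hb, hmin⟩ := exists_witness hF hIF hne hnIJ
      rw [Finset.mem_inter] at ha
      rw [Finset.mem_sdiff] at hb
      have haS : a ∈ S := (hF.1 p.1 hIF).1 ha.1
      have hbS : b ∈ S := (hF.1 p.1 hIF).1 hb.1
      have hca : caCard F a b = p.1.card := caCard_eq_of_min hF hIF ha.1 hb.1 hmin
      have hca' : caCard F b a = p.1.card := (caCard_comm F b a).trans hca
      have hab : a ≠ b := fun h => hb.2 (h ▸ ha.2)
      rcases lt_or_gt_of_ne hab with h | h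
      · exact ⟨(a, b), haS, hbS, h, Or.inl ⟨ha.1, hb.1, hca, Or.inl ⟨ha.2, hb.2⟩, hc⟩⟩
      · exact ⟨(b, a), hbS, haS, h, Or.inl ⟨hb.1, ha.1, hca', Or.inr ⟨ha.2, hb.2⟩, hc⟩⟩
    · push_neg at hc
      have hne' : (p.2 ∩ p.1).Nonempty := by rwa [Finset.inter_comm]
      obtain ⟨a, ha, b, hb, hmin⟩ := exists_witness hG hJG hne' hnJI
      rw [Finset.mem_inter] at ha
      rw [Finset.mem_sdiff] at hb
      have haS : a ∈ S := (hG.1 p.2 hJG).1 ha.1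
      have hbS : b ∈ S := (hG.1 p.2 hJG).1 hb.1
      have hca : caCard G a b = p.2.card := caCard_eq_of_min hG hJG ha.1 hb.1 hmin
      have hca' : caCard G b a = p.2.card := (caCard_comm G b a).trans hca
      have hab : a ≠ b := fun h => hb.2 (h ▸ ha.2)
      rcases lt_or_gt_of_ne hab with h | h
      · exact ⟨(a, b), haS, hbS, h, Or.inr ⟨ha.1, hb.1, hca, Or.inl ⟨ha.2, hb.2⟩, hc⟩⟩
      · exact ⟨(b, a), hbS, haS, h, Or.inr ⟨hb.1, ha.1, hca', Or.inr ⟨ha.2, hb.2⟩, hc⟩⟩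
  by_cases hXE : X = ∅
  · have h0 : dCM F G = 0 := by rw [dCM, ← hX, hXE]; rfl
    rw [h0]
    rw [dCC]
    push_cast
    have : (0 : ℚ) ≤ ∑ i ∈ S, ∑ j ∈ S, |((Umat F i j : ℚ)) - ((Umat G i j : ℚ))| :=
      Finset.sum_nonneg fun i _ => Finset.sum_nonneg fun j _ => abs_nonneg _
    linarith
  · obtain ⟨p0, hp0⟩ := Finset.nonempty_iff_ne_empty.mpr hXE
    set Phi : Finset α × Finset α → α × α := fun p =>
      if h : ∃ q : α × α, P p q then h.choose else (hPex p0 hp0).choose with hPhi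
    have hPhiP : ∀ p ∈ X, P p (Phi p) := by
      intro p hp
      rw [hPhi]
      simp only
      rw [dif_pos (hPex p hp)]
      exact (hPex p hp).choose_spec
    have hmaps : ∀ p ∈ X, Phi p ∈ S ×ˢ S := by
      intro p hp
      obtain ⟨h1, h2, _⟩ := hPhiP p hp
      exact Finset.mem_product.mpr ⟨h1, h2⟩
    have hfib := Finset.card_eq_sum_card_fiberwise hmaps
    -- fiber bound
    have hfibbd : ∀ q : α × α, (((X.filter fun p => Phi p = q).card : ℚ)) ≤ w q := by
      intro q
      by_cases hfe : (X.filter fun p => Phi p = q) = ∅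
      · rw [hfe]
        simp only [Finset.card_empty, Nat.cast_zero]
        exact abs_nonneg _
      · obtain ⟨pw, hpw⟩ := Finset.nonempty_iff_ne_empty.mpr hfe
        rw [Finset.mem_filter] at hpw
        have hPw : P pw q := hpw.2 ▸ hPhiP pw hpw.1
        have hxS := hPw.1
        have hyS := hPw.2.1
        have hlt := hPw.2.2.1
        have hxy : q.1 ≠ q.2 := ne_of_lt hlt
        obtain ⟨MF, hMF, hxMF, hyMF, hMFc, hMFmin⟩ := caCard_spec hF hxS hyS
        obtain ⟨MG, hMG, hxMG, hyMG, hMGc, hMGmin⟩ := caCard_spec hG hxS hyS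
        have hf2 : 2 ≤ caCard F q.1 q.2 := by
          rw [← hMFc]
          have : ({q.1, q.2} : Finset α) ⊆ MF := by
            intro c hc
            rcases Finset.mem_insert.mp hc with h | h
            · exact h ▸ hxMF
            · exact (Finset.mem_singleton.mp h) ▸ hyMF
          calc 2 = ({q.1, q.2} : Finset α).card := (Finset.card_pair hxy).symm
            _ ≤ MF.card := Finset.card_le_card this
        have hg2 : 2 ≤ caCard G q.1 q.2 := by
          rw [← hMGc]
          have : ({q.1, q.2} : Finset α) ⊆ MG := by
            intro c hc
            rcases Finset.mem_insert.mp hc with h | h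
            · exact h ▸ hxMG
            · exact (Finset.mem_singleton.mp h) ▸ hyMG
          calc 2 = ({q.1, q.2} : Finset α).card := (Finset.card_pair hxy).symm
            _ ≤ MG.card := Finset.card_le_card this
        -- type-1 consequence: g > f ; type-2 consequence: f > g
        have htype1 : ∀ p ∈ X, Phi p = q →
            (q.1 ∈ p.1 ∧ q.2 ∈ p.1 ∧ caCard F q.1 q.2 = p.1.card ∧
              ((q.1 ∈ p.2 ∧ q.2 ∉ p.2) ∨ (q.2 ∈ p.2 ∧ q.1 ∉ p.2)) ∧ p.1.card ≤ p.2.card) →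
            caCard F q.1 q.2 < caCard G q.1 q.2 := by
          intro p hp hq hcl
          obtain ⟨hpF, hpG, _⟩ := hXmem p hp
          obtain ⟨_, _, hcaf, hxor, hcard⟩ := hcl
          have hss : p.2 ⊂ MG := by
            rw [Finset.ssubset_iff_subset_ne]
            rcases hxor with ⟨h1, h2⟩ | ⟨h1, h2⟩
            · rcases compat_nested (hG.2.1 p.2 hpG MG hMG) h1 hxMG with h | h
              · exact ⟨h, fun e => h2 (e ▸ hyMG)⟩
              · exact absurd (h hyMG) h2
            · rcases compat_nested (hG.2.1 p.2 hpG MG hMG) h1 hyMG with h | h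
              · exact ⟨h, fun e => h2 (e ▸ hxMG)⟩
              · exact absurd (h hxMG) h2
          have := Finset.card_lt_card hss
          rw [hMGc] at this
          omega
        have htype2 : ∀ p ∈ X, Phi p = q →
            (q.1 ∈ p.2 ∧ q.2 ∈ p.2 ∧ caCard G q.1 q.2 = p.2.card ∧
              ((q.1 ∈ p.1 ∧ q.2 ∉ p.1) ∨ (q.2 ∈ p.1 ∧ q.1 ∉ p.1)) ∧ p.2.card < p.1.card) →
            caCard G q.1 q.2 < caCard F q.1 q.2 := by
          intro p hp hq hcl
          obtain ⟨hpF, hpG, _⟩ := hXmem p hp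
          obtain ⟨_, _, hcag, hxor, hcard⟩ := hcl
          have hss : p.1 ⊂ MF := by
            rw [Finset.ssubset_iff_subset_ne]
            rcases hxor with ⟨h1, h2⟩ | ⟨h1, h2⟩
            · rcases compat_nested (hF.2.1 p.1 hpF MF hMF) h1 hxMF with h | h
              · exact ⟨h, fun e => h2 (e ▸ hyMF)⟩
              · exact absurd (h hyMF) h2
            · rcases compat_nested (hF.2.1 p.1 hpF MF hMF) h1 hyMF with h | h
              · exact ⟨h, fun e => h2 (e ▸ hxMF)⟩
              · exact absurd (h hxMF) h2
          have := Finset.card_lt_card hss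
          rw [hMFc] at this
          omega
        have hwabs : w q = |((caCard F q.1 q.2 : ℚ)) - ((caCard G q.1 q.2 : ℚ))| := by
          rw [hw]
          simp only [Umat]
          push_cast
          ring_nf
        rcases (hPw.2.2.2) with hcl0 | hcl0
        · -- all fibers are type 1
          have hgf : caCard F q.1 q.2 < caCard G q.1 q.2 := htype1 pw hpw.1 hpw.2 hcl0
          have hall : ∀ p ∈ X.filter (fun p => Phi p = q),
              (q.1 ∈ p.1 ∧ q.2 ∈ p.1 ∧ caCard F q.1 q.2 = p.1.card ∧
                ((q.1 ∈ p.2 ∧ q.2 ∉ p.2) ∨ (q.2 ∈ p.2 ∧ q.1 ∉ p.2)) ∧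
                p.1.card ≤ p.2.card) := by
            intro p hp
            rw [Finset.mem_filter] at hp
            have hPp : P p q := hp.2 ▸ hPhiP p hp.1
            rcases hPp.2.2.2 with h | h
            · exact h
            · exact absurd (htype2 p hp.1 hp.2 h) (by omega)
          set T := G.filter fun J => ((q.1 ∈ J ∧ q.2 ∉ J) ∨ (q.2 ∈ J ∧ q.1 ∉ J)) ∧
              caCard F q.1 q.2 ≤ J.card with hT
          have hinj : ((X.filter fun p => Phi p = q).card) ≤ T.card := by
            apply Finset.card_le_card_of_injOn (fun p => p.2)
            · intro p hp
              obtain ⟨_, _, _, hxor, hcard⟩ := hall p hp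
              rw [hT, Finset.mem_coe, Finset.mem_filter]
              refine ⟨(hXmem p (Finset.mem_filter.mp hp).1).2.1, hxor, ?_⟩
              beta_reduce
              omega
            · intro p hp p' hp' he
              simp only [Finset.coe_filter, Set.mem_setOf_eq] at hp hp'
              obtain ⟨hpX, hpq⟩ := hp
              obtain ⟨hp'X, hp'q⟩ := hp'
              have hpm : p ∈ X.filter (fun p => Phi p = q) :=
                Finset.mem_filter.mpr ⟨hpX, hpq⟩
              have hp'm : p' ∈ X.filter (fun p => Phi p = q) :=
                Finset.mem_filter.mpr ⟨hp'X, hp'q⟩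
              obtain ⟨hx1, _, hca1, _, _⟩ := hall p hpm
              obtain ⟨hx1', _, hca1', _, _⟩ := hall p' hp'm
              have h1 : p.1 = p'.1 :=
                nested_eq hF.2.1 (hXmem p hpX).1 (hXmem p' hp'X).1 hx1 hx1' (by omega)
              exact Prod.ext h1 he
          have hTne : T.Nonempty := by
            refine ⟨pw.2, ?_⟩
            rw [hT, Finset.mem_filter]
            obtain ⟨_, _, _, hxor, hcard⟩ := hcl0
            refine ⟨(hXmem pw hpw.1).2.1, hxor, by omega⟩
          have hcount : T.card + caCard F q.1 q.2 ≤ MG.card :=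
            count_le hG.2.1 hxy hMG hxMG hyMG hf2 hTne
          rw [hMGc] at hcount
          have h5 : (X.filter fun p => Phi p = q).card + caCard F q.1 q.2
              ≤ caCard G q.1 q.2 := by omega
          rw [hwabs, abs_sub_comm,
            abs_of_nonneg (sub_nonneg.mpr (Nat.cast_le.mpr hgf.le :
              ((caCard F q.1 q.2 : ℚ)) ≤ ((caCard G q.1 q.2 : ℚ))))]
          rw [le_sub_iff_add_le]
          exact_mod_cast h5
        · -- all fibers are type 2
          have hgf : caCard G q.1 q.2 < caCard F q.1 q.2 := htype2 pw hpw.1 hpw.2 hcl0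
          have hall : ∀ p ∈ X.filter (fun p => Phi p = q),
              (q.1 ∈ p.2 ∧ q.2 ∈ p.2 ∧ caCard G q.1 q.2 = p.2.card ∧
                ((q.1 ∈ p.1 ∧ q.2 ∉ p.1) ∨ (q.2 ∈ p.1 ∧ q.1 ∉ p.1)) ∧
                p.2.card < p.1.card) := by
            intro p hp
            rw [Finset.mem_filter] at hp
            have hPp : P p q := hp.2 ▸ hPhiP p hp.1
            rcases hPp.2.2.2 with h | h
            · exact absurd (htype1 p hp.1 hp.2 h) (by omega)
            · exact h
          set T := F.filter fun J => ((q.1 ∈ J ∧ q.2 ∉ J) ∨ (q.2 ∈ J ∧ q.1 ∉ J)) ∧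
              caCard G q.1 q.2 + 1 ≤ J.card with hT
          have hinj : ((X.filter fun p => Phi p = q).card) ≤ T.card := by
            apply Finset.card_le_card_of_injOn (fun p => p.1)
            · intro p hp
              obtain ⟨_, _, _, hxor, hcard⟩ := hall p hp
              rw [hT, Finset.mem_coe, Finset.mem_filter]
              refine ⟨(hXmem p (Finset.mem_filter.mp hp).1).1, hxor, ?_⟩
              beta_reduce
              omega
            · intro p hp p' hp' he
              simp only [Finset.coe_filter, Set.mem_setOf_eq] at hp hp'
              obtain ⟨hpX, hpq⟩ := hp
              obtain ⟨hp'X, hp'q⟩ := hp'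
              have hpm : p ∈ X.filter (fun p => Phi p = q) :=
                Finset.mem_filter.mpr ⟨hpX, hpq⟩
              have hp'm : p' ∈ X.filter (fun p => Phi p = q) :=
                Finset.mem_filter.mpr ⟨hp'X, hp'q⟩
              obtain ⟨hx1, _, hca1, _, _⟩ := hall p hpm
              obtain ⟨hx1', _, hca1', _, _⟩ := hall p' hp'm
              have h2 : p.2 = p'.2 :=
                nested_eq hG.2.1 (hXmem p hpX).2.1 (hXmem p' hp'X).2.1 hx1 hx1' (by omega)
              exact Prod.ext he h2
          have hTne : T.Nonempty := by
            refine ⟨pw.1, ?_⟩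
            rw [hT, Finset.mem_filter]
            obtain ⟨_, _, _, hxor, hcard⟩ := hcl0
            refine ⟨(hXmem pw hpw.1).1, hxor, by omega⟩
          have hcount : T.card + (caCard G q.1 q.2 + 1) ≤ MF.card :=
            count_le hF.2.1 hxy hMF hxMF hyMF (by omega) hTne
          rw [hMFc] at hcount
          have h5 : (X.filter fun p => Phi p = q).card + caCard G q.1 q.2
              ≤ caCard F q.1 q.2 := by omega
          rw [hwabs,
            abs_of_nonneg (sub_nonneg.mpr (Nat.cast_le.mpr hgf.le :
              ((caCard G q.1 q.2 : ℚ)) ≤ ((caCard F q.1 q.2 : ℚ))))]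
          rw [le_sub_iff_add_le]
          exact_mod_cast h5
    -- assemble
    have hvanish : ∀ q ∈ S ×ˢ S, q ∉ (S ×ˢ S).filter (fun q => q.1 < q.2) →
        ((X.filter fun p => Phi p = q).card) = 0 := by
      intro q hq hq2
      rw [Finset.card_eq_zero, Finset.filter_eq_empty_iff]
      intro p hp he
      exact hq2 (Finset.mem_filter.mpr ⟨hq, he ▸ (hPhiP p hp).2.2.1⟩)
    have hsum1 : (X.card : ℚ) = ∑ q ∈ (S ×ˢ S).filter (fun q => q.1 < q.2),
        ((X.filter fun p => Phi p = q).card : ℚ) := by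
      rw [hfib]
      push_cast
      rw [Finset.sum_subset (Finset.filter_subset _ _)]
      intro q hq hq2
      rw [hvanish q hq hq2]
      rfl
    have hsum2 : ∑ q ∈ (S ×ˢ S).filter (fun q => q.1 < q.2),
        ((X.filter fun p => Phi p = q).card : ℚ)
        ≤ ∑ q ∈ (S ×ˢ S).filter (fun q => q.1 < q.2), w q :=
      Finset.sum_le_sum fun q _ => hfibbd q
    -- symmetry of w
    have hwsymm : ∀ q : α × α, w q.swap = w q := by
      intro q
      rw [hw]
      simp only [Prod.fst_swap, Prod.snd_swap, Umat]
      rw [caCard_comm F q.2 q.1, caCard_comm G q.2 q.1]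
    have hswap : ∑ q ∈ (S ×ˢ S).filter (fun q => q.1 < q.2), w q
        = ∑ q ∈ (S ×ˢ S).filter (fun q => q.2 < q.1), w q := by
      refine Finset.sum_nbij' (fun q => q.swap) (fun q => q.swap) ?_ ?_ ?_ ?_ ?_
      · intro q hq
        rw [Finset.mem_filter, Finset.mem_product] at hq ⊢
        exact ⟨⟨hq.1.2, hq.1.1⟩, hq.2⟩
      · intro q hq
        rw [Finset.mem_filter, Finset.mem_product] at hq ⊢
        exact ⟨⟨hq.1.2, hq.1.1⟩, hq.2⟩
      · intro q _; exact Prod.swap_swap q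
      · intro q _; exact Prod.swap_swap q
      · intro q _; exact (hwsymm q).symm
    have hwnonneg : ∀ q ∈ S ×ˢ S, 0 ≤ w q := fun q _ => abs_nonneg _
    have hhalf : ∑ q ∈ (S ×ˢ S).filter (fun q => q.1 < q.2), w q
        ≤ (1 / 2) * ∑ q ∈ S ×ˢ S, w q := by
      have hdisj : Disjoint ((S ×ˢ S).filter (fun q => q.1 < q.2))
          ((S ×ˢ S).filter (fun q => q.2 < q.1)) := by
        rw [Finset.disjoint_filter]
        intro q _ h1 h2
        exact absurd h1 (not_lt_of_gt h2)
      have hsub : ((S ×ˢ S).filter (fun q => q.1 < q.2)) ∪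
          ((S ×ˢ S).filter (fun q => q.2 < q.1)) ⊆ S ×ˢ S :=
        Finset.union_subset (Finset.filter_subset _ _) (Finset.filter_subset _ _)
      have h6 : ∑ q ∈ ((S ×ˢ S).filter (fun q => q.1 < q.2)) ∪
          ((S ×ˢ S).filter (fun q => q.2 < q.1)), w q ≤ ∑ q ∈ S ×ˢ S, w q :=
        Finset.sum_le_sum_of_subset_of_nonneg hsub fun q hq _ => hwnonneg q hq
      rw [Finset.sum_union hdisj, ← hswap] at h6
      linarith
    have hdcc : dCC S F G = (1 / 2) * ∑ q ∈ S ×ˢ S, w q := by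
      rw [dCC, hw, ← Finset.sum_product']
    have hdcm : (dCM F G : ℚ) = (X.card : ℚ) := by rw [dCM, hX]
    rw [hdcm, hdcc, hsum1]
    calc ∑ q ∈ (S ×ˢ S).filter (fun q => q.1 < q.2),
          ((X.filter fun p => Phi p = q).card : ℚ)
        ≤ ∑ q ∈ (S ×ˢ S).filter (fun q => q.1 < q.2), w q := hsum2
      _ ≤ (1 / 2) * ∑ q ∈ S ×ˢ S, w q := hhalf

end TreeDist
end

section
/- Let 𝒜, ℬ be nondegenerate hierarchies over a finite set S. Then for every I ∈ 𝒜 and J ∈ ℬ, the restricted crossing count is symmetric: η_{𝒜,ℬ}(I,J) = η_{ℬ,𝒜}(J,I). Consequently Σ_{I∈𝒜, J∈ℬ} θ(η_{𝒜,ℬ}(I,J)) = Σ_{J∈ℬ, I∈𝒜} θ(η_{ℬ,𝒜}(J,I)), i.e., the closed-form NNI navigation distance d_Nav is symmetric on nondegenerate hierarchies. -/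
open scoped Classical

namespace TreeDist

variable {α : Type*} [DecidableEq α]

set_option linter.unusedSectionVars false

lemma compat_comm {A B : Finset α} : Compatible A B ↔ Compatible B A := by
  unfold Compatible; rw [Finset.inter_comm]; tauto

lemma not_compat_iff {A B : Finset α} :
    ¬ Compatible A B ↔ (A ∩ B).Nonempty ∧ ¬ A ⊆ B ∧ ¬ B ⊆ A := by
  unfold Compatible
  rw [← Finset.not_nonempty_iff_eq_empty]
  tauto

lemma notsub {A₁ A₂ B₁ B₂ : Finset α}
    (hU : A₁ ∪ A₂ = B₁ ∪ B₂) (hBd : B₁ ∩ B₂ = ∅) :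
    ¬ A₁ ⊆ B₁ ↔ (A₁ ∩ B₂).Nonempty := by
  constructor
  · intro h
    obtain ⟨x, hx1, hx2⟩ := Finset.not_subset.mp h
    have hxu : x ∈ B₁ ∪ B₂ := hU ▸ Finset.mem_union_left _ hx1
    rcases Finset.mem_union.mp hxu with h' | h'
    · exact absurd h' hx2
    · exact ⟨x, Finset.mem_inter.mpr ⟨hx1, h'⟩⟩
  · rintro ⟨x, hx⟩ h
    rw [Finset.mem_inter] at hx
    have : x ∈ B₁ ∩ B₂ := Finset.mem_inter.mpr ⟨h hx.1, hx.2⟩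
    simp [hBd] at this

lemma cross_char {A₁ A₂ B₁ B₂ : Finset α}
    (hU : A₁ ∪ A₂ = B₁ ∪ B₂) (hAd : A₁ ∩ A₂ = ∅) (hBd : B₁ ∩ B₂ = ∅) :
    (¬ Compatible A₁ B₁) ↔
      (A₁ ∩ B₁).Nonempty ∧ (A₁ ∩ B₂).Nonempty ∧ (A₂ ∩ B₁).Nonempty := by
  rw [not_compat_iff, notsub hU hBd]
  have h2 : ¬ B₁ ⊆ A₁ ↔ (A₂ ∩ B₁).Nonempty := by
    rw [notsub hU.symm hAd, Finset.inter_comm]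
  rw [h2]

lemma card_filter_pair (P : Finset α → Prop) [DecidablePred P] {a b : Finset α}
    (hab : a ≠ b) :
    (({a, b} : Finset (Finset α)).filter P).card
      = (if P a then 1 else 0) + (if P b then 1 else 0) := by
  rw [Finset.filter_insert, Finset.filter_singleton]
  by_cases ha : P a <;> by_cases hb : P b <;>
    simp [ha, hb, Finset.card_insert_of_notMem, hab]

set_option maxHeartbeats 1000000 in
lemma key {A₁ A₂ B₁ B₂ : Finset α}
    (hA1 : A₁.Nonempty) (hA2 : A₂.Nonempty) (hB1 : B₁.Nonempty) (hB2 : B₂.Nonempty)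
    (hAd : A₁ ∩ A₂ = ∅) (hBd : B₁ ∩ B₂ = ∅) (hU : A₁ ∪ A₂ = B₁ ∪ B₂) :
    (({A₁, A₂} : Finset (Finset α)).filter
        (fun A => ∃ B ∈ ({B₁, B₂} : Finset (Finset α)), ¬ Compatible A B)).card =
    (({B₁, B₂} : Finset (Finset α)).filter
        (fun B => ∃ A ∈ ({A₁, A₂} : Finset (Finset α)), ¬ Compatible B A)).card := by
  have hAne : A₁ ≠ A₂ := by
    rintro rfl; rw [Finset.inter_self] at hAd; exact hA1.ne_empty hAd
  have hBne : B₁ ≠ B₂ := by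
    rintro rfl; rw [Finset.inter_self] at hBd; exact hB1.ne_empty hBd
  -- the four intersection-nonemptiness propositions
  set p := (A₁ ∩ B₁).Nonempty with hp'
  set q := (A₁ ∩ B₂).Nonempty with hq'
  set r := (A₂ ∩ B₁).Nonempty with hr'
  set s := (A₂ ∩ B₂).Nonempty with hs'
  have split : ∀ x ∈ A₁ ∪ A₂, x ∈ B₁ ∨ x ∈ B₂ := by
    intro x hx; exact Finset.mem_union.mp (hU ▸ hx)
  have hpq : p ∨ q := by
    obtain ⟨x, hx⟩ := hA1
    rcases split x (Finset.mem_union_left _ hx) with h | h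
    exacts [Or.inl ⟨x, Finset.mem_inter.mpr ⟨hx, h⟩⟩, Or.inr ⟨x, Finset.mem_inter.mpr ⟨hx, h⟩⟩]
  have hrs : r ∨ s := by
    obtain ⟨x, hx⟩ := hA2
    rcases split x (Finset.mem_union_right _ hx) with h | h
    exacts [Or.inl ⟨x, Finset.mem_inter.mpr ⟨hx, h⟩⟩, Or.inr ⟨x, Finset.mem_inter.mpr ⟨hx, h⟩⟩]
  have split' : ∀ x ∈ B₁ ∪ B₂, x ∈ A₁ ∨ x ∈ A₂ := by
    intro x hx; rw [← hU] at hx; exact Finset.mem_union.mp hx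
  have hpr : p ∨ r := by
    obtain ⟨x, hx⟩ := hB1
    rcases split' x (Finset.mem_union_left _ hx) with h | h
    exacts [Or.inl ⟨x, Finset.mem_inter.mpr ⟨h, hx⟩⟩, Or.inr ⟨x, Finset.mem_inter.mpr ⟨h, hx⟩⟩]
  have hqs : q ∨ s := by
    obtain ⟨x, hx⟩ := hB2
    rcases split' x (Finset.mem_union_right _ hx) with h | h
    exacts [Or.inl ⟨x, Finset.mem_inter.mpr ⟨h, hx⟩⟩, Or.inr ⟨x, Finset.mem_inter.mpr ⟨h, hx⟩⟩]
  have c11 : (¬ Compatible A₁ B₁) ↔ p ∧ q ∧ r := cross_char hU hAd hBd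
  have c12 : (¬ Compatible A₁ B₂) ↔ q ∧ p ∧ s :=
    cross_char (by rw [hU, Finset.union_comm]) hAd (by rw [Finset.inter_comm]; exact hBd)
  have c21 : (¬ Compatible A₂ B₁) ↔ r ∧ s ∧ p :=
    cross_char (by rw [Finset.union_comm, hU]) (by rw [Finset.inter_comm]; exact hAd) hBd
  have c22 : (¬ Compatible A₂ B₂) ↔ s ∧ r ∧ q :=
    cross_char (by rw [Finset.union_comm, hU, Finset.union_comm])
      (by rw [Finset.inter_comm]; exact hAd) (by rw [Finset.inter_comm]; exact hBd)
  have e1 : (∃ B ∈ ({B₁, B₂} : Finset (Finset α)), ¬ Compatible A₁ B) ↔ p ∧ q := by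
    simp only [Finset.mem_insert, Finset.mem_singleton, exists_eq_or_imp, exists_eq_left,
      c11, c12]
    constructor
    · rintro (⟨hp, hq, -⟩ | ⟨hq, hp, -⟩) <;> exact ⟨hp, hq⟩
    · rintro ⟨hp, hq⟩
      rcases hrs with hr | hs
      exacts [Or.inl ⟨hp, hq, hr⟩, Or.inr ⟨hq, hp, hs⟩]
  have e2 : (∃ B ∈ ({B₁, B₂} : Finset (Finset α)), ¬ Compatible A₂ B) ↔ r ∧ s := by
    simp only [Finset.mem_insert, Finset.mem_singleton, exists_eq_or_imp, exists_eq_left,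
      c21, c22]
    constructor
    · rintro (⟨hr, hs, -⟩ | ⟨hs, hr, -⟩) <;> exact ⟨hr, hs⟩
    · rintro ⟨hr, hs⟩
      rcases hpq with hp | hq
      exacts [Or.inl ⟨hr, hs, hp⟩, Or.inr ⟨hs, hr, hq⟩]
  have e3 : (∃ A ∈ ({A₁, A₂} : Finset (Finset α)), ¬ Compatible B₁ A) ↔ p ∧ r := by
    simp only [Finset.mem_insert, Finset.mem_singleton, exists_eq_or_imp, exists_eq_left,
      compat_comm (A := B₁), c11, c21]
    constructor
    · rintro (⟨hp, -, hr⟩ | ⟨hr, -, hp⟩) <;> exact ⟨hp, hr⟩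
    · rintro ⟨hp, hr⟩
      rcases hqs with hq | hs
      exacts [Or.inl ⟨hp, hq, hr⟩, Or.inr ⟨hr, hs, hp⟩]
  have e4 : (∃ A ∈ ({A₁, A₂} : Finset (Finset α)), ¬ Compatible B₂ A) ↔ q ∧ s := by
    simp only [Finset.mem_insert, Finset.mem_singleton, exists_eq_or_imp, exists_eq_left,
      compat_comm (A := B₂), c12, c22]
    constructor
    · rintro (⟨hq, -, hs⟩ | ⟨hs, -, hq⟩) <;> exact ⟨hq, hs⟩
    · rintro ⟨hq, hs⟩
      rcases hpr with hp | hr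
      exacts [Or.inl ⟨hq, hp, hs⟩, Or.inr ⟨hs, hr, hq⟩]
  rw [card_filter_pair _ hAne, card_filter_pair _ hBne,
    if_congr e1 rfl rfl, if_congr e2 rfl rfl, if_congr e3 rfl rfl, if_congr e4 rfl rfl]
  by_cases hp : p <;> by_cases hq : q <;> by_cases hr : r <;> by_cases hs : s <;>
    simp_all

lemma exists_parent {S : Finset α} {F : Finset (Finset α)} (hF : IsHierarchy S F)
    {C : Finset α} (hC : C ∈ F) (hCS : C ≠ S) : ∃ P, IsParent F C P := by
  obtain ⟨hsub, hlam, hSF, hsing⟩ := hF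
  have hCne : C.Nonempty := (hsub C hC).2
  have hT : C ⊂ S := ssubset_of_subset_of_ne (hsub C hC).1 hCS
  have hTne : (F.filter (fun Q => C ⊂ Q)).Nonempty := ⟨S, Finset.mem_filter.mpr ⟨hSF, hT⟩⟩
  obtain ⟨P, hPT, hPmin⟩ := (F.filter (fun Q => C ⊂ Q)).exists_min_image Finset.card hTne
  rw [Finset.mem_filter] at hPT
  refine ⟨P, hPT.1, hPT.2, ?_⟩
  intro Q hQ hCQ
  have hle := hPmin Q (Finset.mem_filter.mpr ⟨hQ, hCQ⟩)
  rcases hlam P hPT.1 Q hQ with hd | hsub1 | hsub2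
  · exfalso
    obtain ⟨x, hx⟩ := hCne
    have : x ∈ P ∩ Q := Finset.mem_inter.mpr ⟨hPT.2.subset hx, hCQ.subset hx⟩
    simp [hd] at this
  · exact hsub1
  · exact (Finset.eq_of_subset_of_card_le hsub2 hle).ge

lemma parent_unique {F : Finset (Finset α)} {C P P' : Finset α}
    (h : IsParent F C P) (h' : IsParent F C P') : P = P' :=
  subset_antisymm (h.2.2 P' h'.1 h'.2.1) (h'.2.2 P h.1 h.2.1)

lemma exists_child_mem {S : Finset α} {F : Finset (Finset α)} (hF : IsHierarchy S F)
    {I : Finset α} (hI : I ∈ F) (h2 : 1 < I.card) {i : α} (hi : i ∈ I) :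
    ∃ C ∈ children F I, i ∈ C := by
  obtain ⟨hsub, hlam, hSF, hsing⟩ := hF
  have hsi : ({i} : Finset α) ∈ F := hsing i ((hsub I hI).1 hi)
  have hssub : ({i} : Finset α) ⊂ I := by
    refine ssubset_of_subset_of_ne (Finset.singleton_subset_iff.mpr hi) ?_
    rintro rfl; simp at h2
  have hTne : (F.filter (fun Q => i ∈ Q ∧ Q ⊂ I)).Nonempty :=
    ⟨{i}, Finset.mem_filter.mpr ⟨hsi, Finset.mem_singleton_self i, hssub⟩⟩
  obtain ⟨C, hCT, hCmax⟩ :=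
    (F.filter (fun Q => i ∈ Q ∧ Q ⊂ I)).exists_max_image Finset.card hTne
  rw [Finset.mem_filter] at hCT
  obtain ⟨hCF, hiC, hCI⟩ := hCT
  refine ⟨C, Finset.mem_filter.mpr ⟨hCF, hI, hCI, ?_⟩, hiC⟩
  intro Q hQ hCQ
  rcases hlam Q hQ I hI with hd | hs1 | hs2
  · exfalso
    have : i ∈ Q ∩ I := Finset.mem_inter.mpr ⟨hCQ.subset hiC, hi⟩
    simp [hd] at this
  · rcases eq_or_ne Q I with rfl | hne'
    · exact subset_rfl
    · exfalso
      have hss : Q ⊂ I := ssubset_of_subset_of_ne hs1 hne'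
      have hle := hCmax Q (Finset.mem_filter.mpr ⟨hQ, hCQ.subset hiC, hss⟩)
      exact absurd (Finset.card_lt_card hCQ) (not_lt.mpr hle)
  · exact hs2

lemma child_subset {F : Finset (Finset α)} {I C : Finset α} (h : C ∈ children F I) :
    C ⊆ I := by
  simp only [children, Finset.mem_filter] at h
  exact h.2.2.1.subset

lemma child_inter_empty {S : Finset α} {F : Finset (Finset α)} (hF : IsHierarchy S F)
    {I C₁ C₂ : Finset α} (h1 : C₁ ∈ children F I) (h2 : C₂ ∈ children F I)
    (hne : C₁ ≠ C₂) : C₁ ∩ C₂ = ∅ := by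
  simp only [children, Finset.mem_filter] at h1 h2
  rcases hF.2.1 C₁ h1.1 C₂ h2.1 with hd | hs | hs
  · exact hd
  · exfalso
    have hIC : I ⊆ C₂ := h1.2.2.2 C₂ h2.1 (ssubset_of_subset_of_ne hs hne)
    exact absurd (lt_of_le_of_lt hIC h2.2.2.1) (lt_irrefl _)
  · exfalso
    have hIC : I ⊆ C₁ := h2.2.2.2 C₁ h1.1 (ssubset_of_subset_of_ne hs (Ne.symm hne))
    exact absurd (lt_of_le_of_lt hIC h1.2.2.1) (lt_irrefl _)

lemma children_empty_of_card_le_one {S : Finset α} {F : Finset (Finset α)}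
    (hF : IsHierarchy S F) {I : Finset α} (h1 : I.card ≤ 1) : children F I = ∅ := by
  rw [Finset.eq_empty_iff_forall_notMem]
  intro C hC
  simp only [children, Finset.mem_filter] at hC
  have h := Finset.card_lt_card hC.2.2.1
  have := (hF.1 C hC.1).2.card_pos
  omega

set_option maxHeartbeats 800000 in
lemma children_card_two {S : Finset α} {F : Finset (Finset α)} (hF : Nondeg S F)
    {I : Finset α} (hI : I ∈ F) (h2 : 1 < I.card) : (children F I).card = 2 := by
  obtain ⟨hH, hcard⟩ := hF
  have hsub := hH.1
  have hSF := hH.2.2.1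
  have hsing := hH.2.2.2
  have hbi : F.erase S = F.biUnion (fun I => children F I) := by
    ext C
    simp only [Finset.mem_erase, Finset.mem_biUnion]
    constructor
    · rintro ⟨hne, hCF⟩
      obtain ⟨P, hP⟩ := exists_parent hH hCF hne
      exact ⟨P, hP.1, Finset.mem_filter.mpr ⟨hCF, hP⟩⟩
    · rintro ⟨P, hPF, hC⟩
      simp only [children, Finset.mem_filter] at hC
      refine ⟨?_, hC.1⟩
      rintro rfl
      exact absurd (lt_of_lt_of_le hC.2.2.1 (hsub P hPF).1) (lt_irrefl _)
  have hdisj : ∀ I₁ ∈ F, ∀ I₂ ∈ F, I₁ ≠ I₂ → Disjoint (children F I₁) (children F I₂) := by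
    intro I₁ _ I₂ _ hne
    rw [Finset.disjoint_left]
    intro C h1 h2
    simp only [children, Finset.mem_filter] at h1 h2
    exact hne (parent_unique h1.2 h2.2)
  have hsum : (F.erase S).card = ∑ I ∈ F, (children F I).card := by
    rw [hbi, Finset.card_biUnion hdisj]
  have hsplit : ∑ I ∈ F, (children F I).card
      = ∑ I ∈ F.filter (fun I => 1 < I.card), (children F I).card := by
    rw [← Finset.sum_filter_add_sum_filter_not F (fun I => 1 < I.card)]
    have : ∑ I ∈ F.filter (fun I => ¬ 1 < I.card), (children F I).card = 0 := by
      refine Finset.sum_eq_zero ?_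
      intro I hIm
      rw [Finset.mem_filter] at hIm
      rw [children_empty_of_card_le_one hH (Nat.le_of_not_lt hIm.2)]
      simp
    rw [this, add_zero]
  have hleaf : F.filter (fun I => ¬ 1 < I.card) = S.image (fun i => ({i} : Finset α)) := by
    ext A
    simp only [Finset.mem_filter, Finset.mem_image]
    constructor
    · rintro ⟨hAF, hA⟩
      have hpos := (hsub A hAF).2.card_pos
      have hA1 : A.card = 1 := by omega
      obtain ⟨i, rfl⟩ := Finset.card_eq_one.mp hA1
      exact ⟨i, (hsub _ hAF).1 (Finset.mem_singleton_self i), rfl⟩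
    · rintro ⟨i, hiS, rfl⟩
      exact ⟨hsing i hiS, by simp⟩
  have hleafcard : (F.filter (fun I => ¬ 1 < I.card)).card = S.card := by
    rw [hleaf, Finset.card_image_of_injective _ (fun a b h => by simpa using h)]
  have hsplitcard := Finset.card_filter_add_card_filter_not
    (s := F) (p := fun I => 1 < I.card)
  have hSpos : 1 ≤ S.card := (hsub S hSF).2.card_pos
  have hintcard : (F.filter (fun I => 1 < I.card)).card = S.card - 1 := by omega
  have hge : ∀ I ∈ F.filter (fun I => 1 < I.card), 2 ≤ (children F I).card := by
    intro I hIm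
    rw [Finset.mem_filter] at hIm
    obtain ⟨hIF, hI2⟩ := hIm
    obtain ⟨i, hi, j, hj, hij⟩ := Finset.one_lt_card.mp hI2
    obtain ⟨C, hC, hiC⟩ := exists_child_mem hH hIF hI2 hi
    have hCmem := hC
    simp only [children, Finset.mem_filter] at hCmem
    have hCI : C ⊂ I := hCmem.2.2.1
    obtain ⟨k, hkI, hkC⟩ := Finset.exists_of_ssubset hCI
    obtain ⟨C', hC', hkC'⟩ := exists_child_mem hH hIF hI2 hkI
    have hne : C ≠ C' := fun h => hkC (h ▸ hkC')
    exact Finset.one_lt_card.mpr ⟨C, hC, C', hC', hne⟩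
  have herase : (F.erase S).card = F.card - 1 := Finset.card_erase_of_mem hSF
  have hFpos : 1 ≤ F.card := Finset.card_pos.mpr ⟨S, hSF⟩
  have htot : ∑ I ∈ F.filter (fun I => 1 < I.card), (children F I).card
      = 2 * (S.card - 1) := by omega
  have hsum2 : ∑ I ∈ F.filter (fun I => 1 < I.card), (2 : ℕ) = 2 * (S.card - 1) := by
    rw [Finset.sum_const, hintcard, smul_eq_mul, mul_comm]
  have hall := (Finset.sum_eq_sum_iff_of_le hge).mp (by rw [htot, hsum2])
  have := hall I (Finset.mem_filter.mpr ⟨hI, h2⟩)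
  omega



lemma children_struct {S : Finset α} {F : Finset (Finset α)} (hF : Nondeg S F)
    {I : Finset α} (hI : I ∈ F) (h2 : 1 < I.card) :
    ∃ C₁ C₂, C₁ ≠ C₂ ∧ children F I = {C₁, C₂} ∧ C₁ ∩ C₂ = ∅ ∧ C₁ ∪ C₂ = I := by
  obtain ⟨C₁, C₂, hne, hch⟩ := Finset.card_eq_two.mp (children_card_two hF hI h2)
  have h1 : C₁ ∈ children F I := by rw [hch]; simp
  have h2' : C₂ ∈ children F I := by rw [hch]; simp
  refine ⟨C₁, C₂, hne, hch, child_inter_empty hF.1 h1 h2' hne, ?_⟩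
  apply subset_antisymm
  · exact Finset.union_subset (child_subset h1) (child_subset h2')
  · intro i hi
    obtain ⟨C, hC, hiC⟩ := exists_child_mem hF.1 hI h2 hi
    rw [hch] at hC
    rcases Finset.mem_insert.mp hC with rfl | hC
    · exact Finset.mem_union_left _ hiC
    · rw [Finset.mem_singleton] at hC
      subst hC
      exact Finset.mem_union_right _ hiC

lemma restrict_struct {S : Finset α} {F : Finset (Finset α)} (hF : Nondeg S F)
    {I : Finset α} (hI : I ∈ F) (K : Finset α) :
    restrictFam (children F I) K = ∅ ∨
    restrictFam (children F I) K = {I ∩ K} ∨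
    ∃ A₁ A₂, A₁.Nonempty ∧ A₂.Nonempty ∧ A₁ ∩ A₂ = ∅ ∧ A₁ ∪ A₂ = I ∩ K ∧
      restrictFam (children F I) K = {A₁, A₂} := by
  by_cases h2 : 1 < I.card
  · obtain ⟨C₁, C₂, hne, hch, hdisj, hcover⟩ := children_struct hF hI h2
    have himg : restrictFam (children F I) K
        = ({C₁ ∩ K, C₂ ∩ K} : Finset (Finset α)).filter (fun A => A.Nonempty) := by
      rw [restrictFam, hch]
      congr 1
      rw [Finset.image_insert, Finset.image_singleton]
    have hd' : (C₁ ∩ K) ∩ (C₂ ∩ K) = ∅ := by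
      rw [← Finset.subset_empty, ← hdisj]
      intro x hx
      simp only [Finset.mem_inter] at hx ⊢
      exact ⟨hx.1.1, hx.2.1⟩
    have hu' : (C₁ ∩ K) ∪ (C₂ ∩ K) = I ∩ K := by
      rw [← Finset.union_inter_distrib_right, hcover]
    by_cases hn1 : (C₁ ∩ K).Nonempty <;> by_cases hn2 : (C₂ ∩ K).Nonempty
    · right; right
      refine ⟨C₁ ∩ K, C₂ ∩ K, hn1, hn2, hd', hu', ?_⟩
      rw [himg, Finset.filter_insert, Finset.filter_singleton, if_pos hn1, if_pos hn2]
    · right; left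
      rw [himg, Finset.filter_insert, Finset.filter_singleton, if_pos hn1, if_neg hn2]
      rw [Finset.not_nonempty_iff_eq_empty] at hn2
      rw [← hu', hn2, Finset.union_empty]
      simp
    · right; left
      rw [himg, Finset.filter_insert, Finset.filter_singleton, if_neg hn1, if_pos hn2]
      rw [Finset.not_nonempty_iff_eq_empty] at hn1
      rw [← hu', hn1, Finset.empty_union]
    · left
      rw [himg, Finset.filter_insert, Finset.filter_singleton, if_neg hn1, if_neg hn2]
  · left
    rw [restrictFam, children_empty_of_card_le_one hF.1 (Nat.le_of_not_lt h2)]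
    simp

lemma restrict_children_subset {F : Finset (Finset α)} {J K B : Finset α}
    (hB : B ∈ restrictFam (children F J) K) : B ⊆ J ∩ K ∧ B.Nonempty := by
  simp only [restrictFam, Finset.mem_filter, Finset.mem_image] at hB
  obtain ⟨⟨D, hD, rfl⟩, hne⟩ := hB
  exact ⟨Finset.inter_subset_inter (child_subset hD) subset_rfl, hne⟩

lemma eta_symm {S : Finset α} {F G : Finset (Finset α)} (hF : Nondeg S F) (hG : Nondeg S G)
    {I J : Finset α} (hI : I ∈ F) (hJ : J ∈ G) : eta F G I J = eta G F J I := by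
  have hXsub : ∀ A ∈ restrictFam (children F I) J, A ⊆ I ∩ J := fun A hA =>
    (restrict_children_subset hA).1
  have hYsub : ∀ B ∈ restrictFam (children G J) I, B ⊆ I ∩ J := fun B hB => by
    rw [Finset.inter_comm]
    exact (restrict_children_subset hB).1
  have empX : restrictFam (children F I) J = ∅ → eta F G I J = eta G F J I := by
    intro hX
    rw [eta, hX, Finset.filter_empty, Finset.card_empty, eta]
    have he : (restrictFam (children G J) I).filter
        (fun A => ∃ B ∈ restrictFam (children F I) J, ¬ Compatible A B) = ∅ := by
      rw [Finset.filter_eq_empty_iff]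
      intro A _
      rw [hX]
      rintro ⟨B, hB, -⟩
      exact absurd hB (Finset.notMem_empty B)
    rw [he, Finset.card_empty]
  have empY : restrictFam (children G J) I = ∅ → eta F G I J = eta G F J I := by
    intro hY
    rw [eta, eta, hY, Finset.filter_empty, Finset.card_empty]
    simp
  have singX : restrictFam (children F I) J = {I ∩ J} → eta F G I J = eta G F J I := by
    intro hX
    have h0 : eta F G I J = 0 := by
      rw [eta, hX, Finset.filter_singleton, if_neg]
      · exact Finset.card_empty
      rintro ⟨B, hB, hc⟩
      exact hc (Or.inr (Or.inr (hYsub B hB)))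
    have h0' : eta G F J I = 0 := by
      rw [eta]
      have he : (restrictFam (children G J) I).filter
          (fun A => ∃ B ∈ restrictFam (children F I) J, ¬ Compatible A B) = ∅ := by
        rw [Finset.filter_eq_empty_iff]
        intro A hA
        rw [hX]
        rintro ⟨B, hB, hc⟩
        rw [Finset.mem_singleton] at hB
        subst hB
        exact hc (Or.inr (Or.inl (hYsub A hA)))
      rw [he, Finset.card_empty]
    rw [h0, h0']
  have singY : restrictFam (children G J) I = {J ∩ I} → eta F G I J = eta G F J I := by
    intro hY
    have hXsub' : ∀ A ∈ restrictFam (children F I) J, A ⊆ J ∩ I := by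
      intro A hA
      rw [Finset.inter_comm]
      exact hXsub A hA
    have h0 : eta F G I J = 0 := by
      rw [eta]
      have he : (restrictFam (children F I) J).filter
          (fun A => ∃ B ∈ restrictFam (children G J) I, ¬ Compatible A B) = ∅ := by
        rw [Finset.filter_eq_empty_iff]
        intro A hA
        rw [hY]
        rintro ⟨B, hB, hc⟩
        rw [Finset.mem_singleton] at hB
        subst hB
        exact hc (Or.inr (Or.inl (hXsub' A hA)))
      rw [he, Finset.card_empty]
    have h0' : eta G F J I = 0 := by
      rw [eta, hY, Finset.filter_singleton, if_neg]
      · exact Finset.card_empty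
      rintro ⟨B, hB, hc⟩
      exact hc (Or.inr (Or.inr (hXsub' B hB)))
    rw [h0, h0']
  rcases restrict_struct hF hI J with hX | hX | ⟨A₁, A₂, hA1, hA2, hAd, hAu, hX⟩
  · exact empX hX
  · exact singX hX
  rcases restrict_struct hG hJ I with hY | hY | ⟨B₁, B₂, hB1, hB2, hBd, hBu, hY⟩
  · exact empY hY
  · exact singY hY
  simp only [eta, hX, hY]
  exact key hA1 hA2 hB1 hB2 hAd hBd (by rw [hAu, hBu, Finset.inter_comm])

theorem eta_symm_and_dNav_symm (S : Finset α) (F G : Finset (Finset α))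
    (hF : Nondeg S F) (hG : Nondeg S G) :
    (∀ I ∈ F, ∀ J ∈ G, eta F G I J = eta G F J I) ∧ dNav F G = dNav G F := by
  have h : ∀ I ∈ F, ∀ J ∈ G, eta F G I J = eta G F J I := fun I hI J hJ =>
    eta_symm hF hG hI hJ
  refine ⟨h, ?_⟩
  rw [dNav, dNav, Finset.sum_comm]
  refine Finset.sum_congr rfl fun J hJ => Finset.sum_congr rfl fun I hI => ?_
  rw [h I hI J hJ]

end TreeDist
end

section
/- Let 𝒜, ℬ be nondegenerate hierarchies over a finite set S with |S| ≥ 2, and let {S_L, S_R} be the two children of the root cluster S in ℬ. Then Σ_{I∈𝒜, J∈ℬ} θ(η_{𝒜,ℬ}(I,J)) = Σ_{I∈𝒜} θ( #{A ∈ children(I,𝒜) : A is incompatible with {S_L, S_R}} ) + Σ_{I∈𝒜|_{S_L}, J∈ℬ|_{S_L}} θ(η_{𝒜|_{S_L}, ℬ|_{S_L}}(I,J)) + Σ_{I∈𝒜|_{S_R}, J∈ℬ|_{S_R}} θ(η_{𝒜|_{S_R}, ℬ|_{S_R}}(I,J)), where the sums over restrictions to a singleton block are taken to be 0. (This is the recursion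 satisfied by the closed form of the NNI navigation distance.) -/
open scoped Classical

namespace TreeDist

variable {α : Type*} [DecidableEq α]

set_option linter.unusedSectionVars false

lemma theta_zero : theta (0 : ℕ) = 0 := by simp [theta]

-- ## Basic lemmas

lemma Compatible.of_subset {A B : Finset α} (h : A ⊆ B) : Compatible A B :=
  Or.inr (Or.inl h)

lemma Compatible.of_subset' {A B : Finset α} (h : B ⊆ A) : Compatible A B :=
  Or.inr (Or.inr h)

lemma nested_of_compat {A B : Finset α} (h : Compatible A B) (hne : (A ∩ B).Nonempty) :
    A ⊆ B ∨ B ⊆ A := by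
  rcases h with h | h; · rw [h] at hne; exact absurd rfl hne.ne_empty
  exact h

lemma mem_restrictFam {F : Finset (Finset α)} {K X : Finset α} :
    X ∈ restrictFam F K ↔ (∃ A ∈ F, A ∩ K = X) ∧ X.Nonempty := by
  simp [restrictFam]

lemma mem_children {F : Finset (Finset α)} {I C : Finset α} :
    C ∈ children F I ↔ C ∈ F ∧ IsParent F C I := by
  simp [children]

lemma child_ssubset {F : Finset (Finset α)} {I C : Finset α} (h : C ∈ children F I) :
    C ⊂ I := (mem_children.1 h).2.2.1

lemma child_mem {F : Finset (Finset α)} {I C : Finset α} (h : C ∈ children F I) :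
    C ∈ F := (mem_children.1 h).1

-- restriction lemmas

lemma restrict_restrict {F : Finset (Finset α)} {K J : Finset α} (h : J ⊆ K) :
    restrictFam (restrictFam F K) J = restrictFam F J := by
  ext X
  simp only [mem_restrictFam]
  constructor
  · rintro ⟨⟨B, hB, rfl⟩, hne⟩
    obtain ⟨⟨A, hA, rfl⟩, -⟩ := hB
    refine ⟨⟨A, hA, ?_⟩, hne⟩
    rw [Finset.inter_assoc, Finset.inter_eq_right.2 h]
  · rintro ⟨⟨A, hA, rfl⟩, hne⟩
    refine ⟨⟨A ∩ K, ⟨⟨A, hA, rfl⟩, ?_⟩, ?_⟩, hne⟩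
    · exact hne.mono (by exact Finset.inter_subset_inter (le_refl A) h)
    · rw [Finset.inter_assoc, Finset.inter_eq_right.2 h]

lemma restrict_eq_self {F : Finset (Finset α)} {K : Finset α}
    (h : ∀ A ∈ F, A ⊆ K ∧ A.Nonempty) : restrictFam F K = F := by
  ext X
  simp only [mem_restrictFam]
  constructor
  · rintro ⟨⟨A, hA, rfl⟩, hne⟩
    rwa [Finset.inter_eq_left.2 (h A hA).1]
  · intro hX
    exact ⟨⟨X, hX, Finset.inter_eq_left.2 (h X hX).1⟩, (h X hX).2⟩

lemma restrict_inter {F : Finset (Finset α)} {M I : Finset α}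
    (h : ∀ A ∈ F, A ⊆ M) : restrictFam F (I ∩ M) = restrictFam F I := by
  ext X
  simp only [mem_restrictFam]
  constructor
  · rintro ⟨⟨A, hA, rfl⟩, hne⟩
    refine ⟨⟨A, hA, ?_⟩, hne⟩
    rw [← Finset.inter_assoc, Finset.inter_assoc A I M,
      Finset.inter_comm I M, ← Finset.inter_assoc,
      Finset.inter_eq_left.2 (h A hA)]
  · rintro ⟨⟨A, hA, rfl⟩, hne⟩
    refine ⟨⟨A, hA, ?_⟩, hne⟩
    rw [← Finset.inter_assoc, Finset.inter_assoc A I M,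
      Finset.inter_comm I M, ← Finset.inter_assoc,
      Finset.inter_eq_left.2 (h A hA)]


end TreeDist

namespace Batch2
variable {α : Type*} [DecidableEq α]
open TreeDist

lemma exists_child {S : Finset α} {F : Finset (Finset α)} (hH : IsHierarchy S F)
    {K I : Finset α} (hK : K ∈ F) (hI : I ∈ F) (hKI : K ⊂ I) :
    ∃ A ∈ children F I, K ⊆ A := by
  set T := F.filter fun Q => K ⊆ Q ∧ Q ⊂ I with hT
  have hKT : K ∈ T := by simp [hT, hK, hKI, Finset.Subset.refl]
  obtain ⟨A, hAT, hmax⟩ := T.exists_max_image Finset.card ⟨K, hKT⟩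
  simp only [hT, Finset.mem_filter] at hAT
  obtain ⟨hAF, hKA, hAI⟩ := hAT
  have hKne : K.Nonempty := (hH.1 K hK).2
  refine ⟨A, mem_children.2 ⟨hAF, hI, hAI, ?_⟩, hKA⟩
  intro Q hQ hAQ
  have hcompat := hH.2.1 Q hQ I hI
  have hQI : Q ⊆ I ∨ I ⊆ Q := by
    obtain ⟨x, hx⟩ := hKne
    have hKQ : K ⊆ Q := hKA.trans hAQ.subset
    exact nested_of_compat hcompat ⟨x, Finset.mem_inter.2 ⟨hKQ hx, hKI.subset hx⟩⟩
  rcases hQI with hQI | hQI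
  · rcases hQI.ssubset_or_eq with hQI | rfl
    · exfalso
      have hQT : Q ∈ T := by
        simp [hT, hQ, hKA.trans hAQ.subset, hQI]
      have := hmax Q hQT
      have := Finset.card_lt_card hAQ
      omega
    · exact Finset.Subset.refl _
  · exact hQI

lemma children_disjoint {S : Finset α} {F : Finset (Finset α)} (hH : IsHierarchy S F)
    {I A B : Finset α} (hA : A ∈ children F I) (hB : B ∈ children F I) (hAB : A ≠ B) :
    A ∩ B = ∅ := by
  by_contra h
  have hne : (A ∩ B).Nonempty := Finset.nonempty_iff_ne_empty.2 h
  have hcompat := hH.2.1 A (child_mem hA) B (child_mem hB)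
  have hgoal : ∀ X Y : Finset α, X ∈ children F I → Y ∈ children F I → X ⊆ Y → X ≠ Y → False := by
    intro X Y hX hY hXY hne'
    have hpar := (mem_children.1 hX).2
    have hIY : I ⊆ Y := hpar.2.2 Y (child_mem hY) (hXY.ssubset_of_ne hne')
    exact (child_ssubset hY).not_subset hIY
  rcases nested_of_compat hcompat hne with h' | h'
  · exact hgoal A B hA hB h' hAB
  · exact hgoal B A hB hA h' (Ne.symm hAB)

lemma exists_min_preimage {S : Finset α} {F : Finset (Finset α)} (hH : IsHierarchy S F)
    {M I' : Finset α} (hI' : I' ∈ restrictFam F M) :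
    ∃ I ∈ F, I ∩ M = I' ∧ ∀ K ∈ F, K ∩ M = I' → I ⊆ K := by
  obtain ⟨⟨A0, hA0, hA0e⟩, hne⟩ := mem_restrictFam.1 hI'
  set T := F.filter fun K => K ∩ M = I' with hT
  have hA0T : A0 ∈ T := by simp [hT, hA0, hA0e]
  obtain ⟨I, hIT, hmin⟩ := T.exists_min_image Finset.card ⟨A0, hA0T⟩
  simp only [hT, Finset.mem_filter] at hIT
  refine ⟨I, hIT.1, hIT.2, ?_⟩
  intro K hK hKM
  have hsub : I' ⊆ I ∩ K := by
    intro x hx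
    exact Finset.mem_inter.2 ⟨(hIT.2 ▸ Finset.inter_subset_left) hx,
      (hKM ▸ Finset.inter_subset_left) hx⟩
  have hcompat := hH.2.1 I hIT.1 K hK
  rcases nested_of_compat hcompat (hne.mono hsub) with h | h
  · exact h
  · have hKT : K ∈ T := by simp [hT, hK, hKM]
    have := hmin K hKT
    rw [Finset.eq_of_subset_of_card_le h this]

end Batch2

namespace Batch3
variable {α : Type*} [DecidableEq α]
open TreeDist Batch2

lemma restrict_eq_filter {S : Finset α} {G : Finset (Finset α)} (hH : IsHierarchy S G)
    {M : Finset α} (hM : M ∈ G)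
    (htri : ∀ Q ∈ G, Q = S ∨ Q ⊆ M ∨ Q ∩ M = ∅) :
    restrictFam G M = G.filter (· ⊆ M) := by
  ext X
  simp only [mem_restrictFam, Finset.mem_filter]
  constructor
  · rintro ⟨⟨C, hC, rfl⟩, hne⟩
    rcases htri C hC with rfl | h | h
    · rw [Finset.inter_eq_right.2 (hH.1 M hM).1]
      exact ⟨hM, Finset.Subset.refl _⟩
    · rw [Finset.inter_eq_left.2 h]; exact ⟨hC, h⟩
    · rw [h] at hne; exact absurd rfl hne.ne_empty
  · rintro ⟨hX, hXM⟩
    exact ⟨⟨X, hX, Finset.inter_eq_left.2 hXM⟩, (hH.1 X hX).2⟩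

lemma children_filter {S : Finset α} {G : Finset (Finset α)} (hH : IsHierarchy S G)
    {M J : Finset α}
    (htri : ∀ Q ∈ G, Q = S ∨ Q ⊆ M ∨ Q ∩ M = ∅)
    (hJ : J ∈ G) (hJM : J ⊆ M) :
    children (G.filter (· ⊆ M)) J = children G J := by
  have hJ' : J ∈ G.filter (· ⊆ M) := Finset.mem_filter.2 ⟨hJ, hJM⟩
  ext C
  simp only [mem_children, Finset.mem_filter]
  constructor
  · rintro ⟨⟨hC, hCM⟩, hCin, hCJ, hpar⟩
    refine ⟨hC, hJ, hCJ, ?_⟩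
    intro Q hQ hCQ
    rcases htri Q hQ with rfl | h | h
    · exact (hH.1 J hJ).1
    · exact hpar Q (Finset.mem_filter.2 ⟨hQ, h⟩) hCQ
    · exfalso
      have hsub : C ⊆ Q ∩ M := fun x hx =>
        Finset.mem_inter.2 ⟨hCQ.subset hx, hCM hx⟩
      obtain ⟨x, hx⟩ := (hH.1 C hC).2
      have := hsub hx
      rw [h] at this
      exact absurd this (Finset.notMem_empty x)
  · rintro ⟨hC, hJin, hCJ, hpar⟩
    have hCM : C ⊆ M := hCJ.subset.trans hJM
    exact ⟨⟨hC, hCM⟩, hJ', hCJ, fun Q hQ hCQ =>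
      hpar Q (Finset.mem_filter.1 hQ).1 hCQ⟩

lemma children_restrict_min {S : Finset α} {F : Finset (Finset α)} (hH : IsHierarchy S F)
    {M I : Finset α} (hI : I ∈ F) (hne : (I ∩ M).Nonempty)
    (hmin : ∀ K ∈ F, K ∩ M = I ∩ M → I ⊆ K) :
    children (restrictFam F M) (I ∩ M) = restrictFam (children F I) M := by
  have hI'mem : I ∩ M ∈ restrictFam F M := mem_restrictFam.2 ⟨⟨I, hI, rfl⟩, hne⟩
  ext X
  constructor
  · intro hX
    obtain ⟨hXF', hXin, hXI', hpar⟩ := mem_children.1 hX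
    obtain ⟨K, hK, hKM, hKmin⟩ := exists_min_preimage hH hXF'
    obtain ⟨-, hXne⟩ := mem_restrictFam.1 hXF'
    -- K ⊂ I
    have hKI : K ⊂ I := by
      have hsub : X ⊆ K ∩ I := fun x hx => Finset.mem_inter.2
        ⟨(hKM ▸ Finset.inter_subset_left) hx, (Finset.mem_inter.1 (hXI'.subset hx)).1⟩
      have hcompat := hH.2.1 K hK I hI
      rcases nested_of_compat hcompat (hXne.mono hsub) with h | h
      · refine h.ssubset_of_ne ?_
        rintro rfl
        exact hXI'.ne hKM.symm
      · exfalso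
        have : I ∩ M ⊆ X := hKM ▸ (fun x hx => Finset.mem_inter.2
          ⟨h (Finset.mem_inter.1 hx).1, (Finset.mem_inter.1 hx).2⟩)
        exact hXI'.not_subset this
    obtain ⟨A, hA, hKA⟩ := exists_child hH hK hI hKI
    have hAM : A ∩ M ∈ restrictFam F M := mem_restrictFam.2
      ⟨⟨A, child_mem hA, rfl⟩, hXne.mono (hKM ▸ Finset.inter_subset_inter hKA (Finset.Subset.refl M))⟩
    have hXA : X ⊆ A ∩ M := hKM ▸ Finset.inter_subset_inter hKA (Finset.Subset.refl M)
    have hAMI : A ∩ M ≠ I ∩ M := by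
      intro h
      exact (child_ssubset hA).not_subset (hmin A (child_mem hA) h)
    have hXeq : X = A ∩ M := by
      rcases hXA.ssubset_or_eq with h | h
      · exfalso
        have := hpar (A ∩ M) hAM h
        exact hAMI (le_antisymm
          (Finset.inter_subset_inter (child_ssubset hA).subset (Finset.Subset.refl M)) this)
      · exact h
    rw [hXeq]
    exact mem_restrictFam.2 ⟨⟨A, hA, rfl⟩, hXeq ▸ hXne⟩
  · intro hX
    obtain ⟨⟨A, hA, rfl⟩, hXne⟩ := mem_restrictFam.1 hX
    have hAF : A ∈ F := child_mem hA
    have hAI : A ⊂ I := child_ssubset hA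
    have hXmem : A ∩ M ∈ restrictFam F M := mem_restrictFam.2 ⟨⟨A, hAF, rfl⟩, hXne⟩
    have hXss : A ∩ M ⊂ I ∩ M := by
      refine (Finset.inter_subset_inter hAI.subset (Finset.Subset.refl M)).ssubset_of_ne ?_
      intro h
      exact hAI.not_subset (hmin A hAF h)
    refine mem_children.2 ⟨hXmem, hI'mem, hXss, ?_⟩
    intro Q hQ hAMQ
    obtain ⟨⟨K, hK, rfl⟩, hQne⟩ := mem_restrictFam.1 hQ
    have hAK : A ⊆ K ∨ K ⊆ A := by
      obtain ⟨x, hx⟩ := hXne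
      have hx1 := Finset.mem_inter.1 hx
      exact nested_of_compat (hH.2.1 A hAF K hK)
        ⟨x, Finset.mem_inter.2 ⟨hx1.1, (Finset.mem_inter.1 (hAMQ.subset hx)).1⟩⟩
    rcases hAK with h | h
    · rcases h.ssubset_or_eq with h | rfl
      · have hIK : I ⊆ K := (mem_children.1 hA).2.2.2 K hK h
        exact Finset.inter_subset_inter hIK (Finset.Subset.refl M)
      · exact absurd rfl hAMQ.ne
    · exfalso
      exact hAMQ.not_subset (Finset.inter_subset_inter h (Finset.Subset.refl M))

end Batch3

namespace Batch4
variable {α : Type*} [DecidableEq α]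
open TreeDist Batch2 Batch3

lemma eta_zero_of_disjoint {F G : Finset (Finset α)} {I J : Finset α}
    (h : I ∩ J = ∅) : eta F G I J = 0 := by
  rw [eta, Finset.card_eq_zero, Finset.filter_eq_empty_iff]
  intro X hX
  obtain ⟨⟨A, hA, rfl⟩, hne⟩ := mem_restrictFam.1 hX
  exfalso
  have : A ∩ J ⊆ I ∩ J := Finset.inter_subset_inter (child_ssubset hA).subset (Finset.Subset.refl J)
  rw [h] at this
  exact hne.ne_empty (Finset.subset_empty.1 this)

lemma eta_zero_of_not_min {S : Finset α} {F G : Finset (Finset α)}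
    (hHF : IsHierarchy S F) {M I J : Finset α}
    (hI : I ∈ F) (hJM : J ⊆ M)
    (K : Finset α) (hK : K ∈ F) (hKM : K ∩ M = I ∩ M) (hnKI : ¬ I ⊆ K) :
    eta F G I J = 0 := by
  rw [eta, Finset.card_eq_zero, Finset.filter_eq_empty_iff]
  intro X hX
  obtain ⟨⟨A, hA, rfl⟩, hne⟩ := mem_restrictFam.1 hX
  -- K ⊂ I
  have hKI : K ⊂ I := by
    have hIM : I ∩ M ⊆ K := hKM ▸ Finset.inter_subset_left
    have hsub : (I ∩ M).Nonempty := by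
      refine hne.mono ?_
      intro x hx
      have := Finset.mem_inter.1 hx
      exact Finset.mem_inter.2 ⟨(child_ssubset hA).subset this.1, hJM this.2⟩
    obtain ⟨x, hx⟩ := hsub
    rcases nested_of_compat (hHF.2.1 K hK I hI)
      ⟨x, Finset.mem_inter.2 ⟨hIM hx, (Finset.mem_inter.1 hx).1⟩⟩ with h | h
    · exact h.ssubset_of_ne (by rintro rfl; exact hnKI (Finset.Subset.refl _))
    · exact absurd h hnKI
  obtain ⟨A0, hA0, hKA0⟩ := exists_child hHF hK hI hKI
  -- A = A0
  have hAA0 : A = A0 := by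
    by_contra hAne
    have hdisj := children_disjoint hHF hA hA0 hAne
    have : A ∩ J ⊆ A ∩ A0 := by
      intro x hx
      obtain ⟨hxA, hxJ⟩ := Finset.mem_inter.1 hx
      have hxM : x ∈ M := hJM hxJ
      have hxIM : x ∈ I ∩ M := Finset.mem_inter.2 ⟨(child_ssubset hA).subset hxA, hxM⟩
      have hxK : x ∈ K := (hKM ▸ Finset.inter_subset_left) hxIM
      exact Finset.mem_inter.2 ⟨hxA, hKA0 hxK⟩
    rw [hdisj] at this
    exact hne.ne_empty (Finset.subset_empty.1 this)
  push_neg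
  intro B hB
  obtain ⟨⟨C, hC, rfl⟩, hBne⟩ := mem_restrictFam.1 hB
  -- C ∩ I ⊆ A ∩ J
  refine Compatible.of_subset' ?_
  intro x hx
  obtain ⟨hxC, hxI⟩ := Finset.mem_inter.1 hx
  have hxJ : x ∈ J := (child_ssubset hC).subset hxC
  have hxM : x ∈ M := hJM hxJ
  have hxK : x ∈ K := (hKM ▸ Finset.inter_subset_left) (Finset.mem_inter.2 ⟨hxI, hxM⟩)
  have hxA0 : x ∈ A0 := hKA0 hxK
  rw [hAA0]
  exact Finset.mem_inter.2 ⟨hxA0, hxJ⟩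

lemma eta_restrict {S : Finset α} {F G : Finset (Finset α)}
    (hHF : IsHierarchy S F) (hHG : IsHierarchy S G) {M I J : Finset α}
    (hM : M ∈ G)
    (htri : ∀ Q ∈ G, Q = S ∨ Q ⊆ M ∨ Q ∩ M = ∅)
    (hI : I ∈ F) (hne : (I ∩ M).Nonempty)
    (hmin : ∀ K ∈ F, K ∩ M = I ∩ M → I ⊆ K)
    (hJ : J ∈ G) (hJM : J ⊆ M) :
    eta (restrictFam F M) (restrictFam G M) (I ∩ M) J = eta F G I J := by
  have h1 : restrictFam (children (restrictFam F M) (I ∩ M)) J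
      = restrictFam (children F I) J := by
    rw [children_restrict_min hHF hI hne hmin, restrict_restrict hJM]
  have h2 : restrictFam (children (restrictFam G M) J) (I ∩ M)
      = restrictFam (children G J) I := by
    rw [restrict_eq_filter hHG hM htri, children_filter hHG htri hJ hJM]
    exact restrict_inter fun C hC => (child_ssubset hC).subset.trans hJM
  rw [eta, eta, h1, h2]

end Batch4

namespace Batch5
variable {α : Type*} [DecidableEq α]
open TreeDist Batch2 Batch3 Batch4

lemma mem_restrict_pair {SL SR I X : Finset α} :
    X ∈ restrictFam ({SL, SR} : Finset (Finset α)) I ↔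
      (X = SL ∩ I ∨ X = SR ∩ I) ∧ X.Nonempty := by
  simp only [mem_restrictFam, Finset.mem_insert, Finset.mem_singleton]
  constructor
  · rintro ⟨⟨A, (rfl | rfl), rfl⟩, hne⟩
    exacts [⟨Or.inl rfl, hne⟩, ⟨Or.inr rfl, hne⟩]
  · rintro ⟨(rfl | rfl), hne⟩
    exacts [⟨⟨SL, Or.inl rfl, rfl⟩, hne⟩, ⟨⟨SR, Or.inr rfl, rfl⟩, hne⟩]

lemma subset_of_inter_empty {A S SL SR : Finset α} (hA : A ⊆ S) (hU : SL ∪ SR = S)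
    (h : A ∩ SR = ∅) : A ⊆ SL := by
  intro x hx
  have hxS : x ∈ S := hA hx
  rw [← hU] at hxS
  rcases Finset.mem_union.1 hxS with h' | h'
  · exact h'
  · exact absurd (Finset.mem_inter.2 ⟨hx, h'⟩) (by simp [h])

lemma cross_iff {A S SL SR : Finset α} (hA : A ⊆ S) (hnSA : ¬ S ⊆ A)
    (hU : SL ∪ SR = S) (hD : SL ∩ SR = ∅) :
    (¬ Compatible A SL ∨ ¬ Compatible A SR) ↔ (A ∩ SL).Nonempty ∧ (A ∩ SR).Nonempty := by
  have hU' : SR ∪ SL = S := by rw [Finset.union_comm]; exact hU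
  constructor
  · rintro (h | h) <;> simp only [Compatible, not_or] at h <;>
      obtain ⟨h1, h2, h3⟩ := h
    · refine ⟨Finset.nonempty_iff_ne_empty.2 h1, ?_⟩
      rw [Finset.nonempty_iff_ne_empty]
      intro h4
      exact h2 (subset_of_inter_empty hA hU h4)
    · refine ⟨?_, Finset.nonempty_iff_ne_empty.2 h1⟩
      rw [Finset.nonempty_iff_ne_empty]
      intro h4
      exact h2 (subset_of_inter_empty hA hU' h4)
  · rintro ⟨h1, h2⟩
    have hnL : ¬ A ⊆ SL := by
      intro h
      obtain ⟨x, hx⟩ := h2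
      obtain ⟨hxA, hxR⟩ := Finset.mem_inter.1 hx
      exact absurd (Finset.mem_inter.2 ⟨h hxA, hxR⟩) (by simp [hD])
    have hnR : ¬ A ⊆ SR := by
      intro h
      obtain ⟨x, hx⟩ := h1
      obtain ⟨hxA, hxL⟩ := Finset.mem_inter.1 hx
      exact absurd (Finset.mem_inter.2 ⟨hxL, h hxA⟩) (by simp [hD])
    by_cases hLA : SL ⊆ A
    · refine Or.inr ?_
      simp only [Compatible, not_or]
      refine ⟨h2.ne_empty, hnR, ?_⟩
      intro hRA
      exact hnSA (by rw [← hU]; exact Finset.union_subset hLA hRA)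
    · refine Or.inl ?_
      simp only [Compatible, not_or]
      exact ⟨h1.ne_empty, hnL, hLA⟩

lemma cross_exists_iff {A I S SL SR : Finset α} (hAI : A ⊂ I) (hIS : I ⊆ S)
    (hU : SL ∪ SR = S) (hD : SL ∩ SR = ∅) :
    (∃ B ∈ restrictFam ({SL, SR} : Finset (Finset α)) I, ¬ Compatible A B) ↔
      (A ∩ SL).Nonempty ∧ (A ∩ SR).Nonempty := by
  have hAS : A ⊆ S := hAI.subset.trans hIS
  have hU' : SR ∪ SL = S := by rw [Finset.union_comm]; exact hU
  have hD' : SR ∩ SL = ∅ := by rw [Finset.inter_comm]; exact hD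
  constructor
  · rintro ⟨B, hB, hnc⟩
    obtain ⟨hBeq, hBne⟩ := mem_restrict_pair.1 hB
    simp only [Compatible, not_or] at hnc
    obtain ⟨h1, h2, h3⟩ := hnc
    have key : ∀ (X Y : Finset α), X ∪ Y = S → X ∩ Y = ∅ → B = X ∩ I →
        (A ∩ X).Nonempty ∧ (A ∩ Y).Nonempty := by
      rintro X Y hXY hXYd rfl
      constructor
      · obtain ⟨x, hx⟩ := Finset.nonempty_iff_ne_empty.2 h1
        obtain ⟨hxA, hxB⟩ := Finset.mem_inter.1 hx
        exact ⟨x, Finset.mem_inter.2 ⟨hxA, (Finset.mem_inter.1 hxB).1⟩⟩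
      · rw [Finset.nonempty_iff_ne_empty]
        intro h4
        have hAX : A ⊆ X := subset_of_inter_empty hAS hXY h4
        exact h2 fun x hx => Finset.mem_inter.2 ⟨hAX hx, hAI.subset hx⟩
    rcases hBeq with h | h
    · exact key SL SR hU hD h
    · exact (key SR SL hU' hD' h).symm
  · rintro ⟨h1, h2⟩
    have key : ∀ (X Y : Finset α), X ∪ Y = S → X ∩ Y = ∅ →
        (A ∩ X).Nonempty → (A ∩ Y).Nonempty → ¬ (X ∩ I ⊆ A) →
        ∃ B ∈ restrictFam ({X, Y} : Finset (Finset α)) I, ¬ Compatible A B := by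
      intro X Y hXY hXYd hx hy hns
      have hAXI : A ∩ X ⊆ X ∩ I := fun z hz => Finset.mem_inter.2
        ⟨(Finset.mem_inter.1 hz).2, hAI.subset (Finset.mem_inter.1 hz).1⟩
      refine ⟨X ∩ I, mem_restrict_pair.2 ⟨Or.inl rfl, hx.mono hAXI⟩, ?_⟩
      simp only [Compatible, not_or]
      refine ⟨(hx.mono fun z hz => ?_).ne_empty, ?_, hns⟩
      · obtain ⟨hzA, hzX⟩ := Finset.mem_inter.1 hz
        exact Finset.mem_inter.2 ⟨hzA, Finset.mem_inter.2 ⟨hzX, hAI.subset hzA⟩⟩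
      · intro h
        have hAX : A ⊆ X := h.trans Finset.inter_subset_left
        obtain ⟨z, hz⟩ := hy
        obtain ⟨hzA, hzY⟩ := Finset.mem_inter.1 hz
        exact absurd (Finset.mem_inter.2 ⟨hAX hzA, hzY⟩) (by simp [hXYd])
    by_cases hc : SL ∩ I ⊆ A
    · have hc2 : ¬ (SR ∩ I ⊆ A) := by
        intro hc2
        refine hAI.not_subset fun z hz => ?_
        have hzS : z ∈ S := hIS hz
        rw [← hU] at hzS
        rcases Finset.mem_union.1 hzS with h' | h'
        · exact hc (Finset.mem_inter.2 ⟨h', hz⟩)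
        · exact hc2 (Finset.mem_inter.2 ⟨h', hz⟩)
      obtain ⟨B, hB, hnc⟩ := key SR SL hU' hD' h2 h1 hc2
      refine ⟨B, ?_, hnc⟩
      rw [mem_restrict_pair] at hB ⊢
      tauto
    · obtain ⟨B, hB, hnc⟩ := key SL SR hU hD h1 h2 hc
      exact ⟨B, hB, hnc⟩

end Batch5

namespace Batch6
variable {α : Type*} [DecidableEq α]
open TreeDist Batch2 Batch3 Batch4 Batch5

lemma eta_root {S : Finset α} {F G : Finset (Finset α)}
    (hHF : IsHierarchy S F) {SL SR : Finset α}
    (hch : children G S = {SL, SR}) (hU : SL ∪ SR = S) (hD : SL ∩ SR = ∅)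
    {I : Finset α} (hI : I ∈ F) :
    eta F G I S = ((children F I).filter
      fun A => ¬ Compatible A SL ∨ ¬ Compatible A SR).card := by
  rw [eta, hch]
  have hre : restrictFam (children F I) S = children F I :=
    restrict_eq_self fun A hA => hHF.1 A (child_mem hA)
  rw [hre]
  congr 1
  apply Finset.filter_congr
  intro A hA
  have hAI : A ⊂ I := child_ssubset hA
  have hIS : I ⊆ S := (hHF.1 I hI).1
  have hnSA : ¬ S ⊆ A := fun h => hAI.not_subset ((hHF.1 I hI).1.trans h)
  rw [cross_exists_iff hAI hIS hU hD,
    cross_iff (hAI.subset.trans hIS) hnSA hU hD]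

lemma sum_part {S : Finset α} {F G : Finset (Finset α)}
    (hHF : IsHierarchy S F) (hHG : IsHierarchy S G) {M : Finset α}
    (hM : M ∈ G)
    (htri : ∀ Q ∈ G, Q = S ∨ Q ⊆ M ∨ Q ∩ M = ∅) :
    ∑ J ∈ G.filter (· ⊆ M), ∑ I ∈ F, theta (eta F G I J)
      = dNav (restrictFam F M) (restrictFam G M) := by
  have hGM : restrictFam G M = G.filter (· ⊆ M) := restrict_eq_filter hHG hM htri
  calc ∑ J ∈ G.filter (· ⊆ M), ∑ I ∈ F, theta (eta F G I J)
      = ∑ J ∈ G.filter (· ⊆ M), ∑ I' ∈ restrictFam F M,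
          theta (eta (restrictFam F M) (restrictFam G M) I' J) := ?_
    _ = ∑ I' ∈ restrictFam F M, ∑ J ∈ G.filter (· ⊆ M),
          theta (eta (restrictFam F M) (restrictFam G M) I' J) := Finset.sum_comm
    _ = dNav (restrictFam F M) (restrictFam G M) := by rw [dNav, hGM]
  refine Finset.sum_congr rfl fun J hJ => ?_
  obtain ⟨hJG, hJM⟩ := Finset.mem_filter.1 hJ
  set P : Finset α → Prop := fun I => (I ∩ M).Nonempty ∧ ∀ K ∈ F, K ∩ M = I ∩ M → I ⊆ K
    with hP
  rw [← Finset.sum_filter_add_sum_filter_not F P (fun I => theta (eta F G I J))]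
  have hzero : ∑ I ∈ F.filter fun I => ¬ P I, theta (eta F G I J) = 0 := by
    refine Finset.sum_eq_zero fun I hI => ?_
    obtain ⟨hIF, hnP⟩ := Finset.mem_filter.1 hI
    by_cases hne : (I ∩ M).Nonempty
    · simp only [hP, not_and, not_forall] at hnP
      obtain ⟨K, hK, hKM, hnKI⟩ := hnP hne
      rw [eta_zero_of_not_min hHF hIF hJM K hK hKM hnKI, theta_zero]
    · have hIJ : I ∩ J = ∅ := by
        rw [Finset.not_nonempty_iff_eq_empty] at hne
        refine Finset.subset_empty.1 ?_
        rw [← hne]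
        exact Finset.inter_subset_inter (Finset.Subset.refl I) hJM
      rw [eta_zero_of_disjoint hIJ, theta_zero]
  rw [hzero, add_zero]
  refine Finset.sum_bij (fun I _ => I ∩ M) ?_ ?_ ?_ ?_
  · intro I hI
    obtain ⟨hIF, hne, -⟩ := Finset.mem_filter.1 hI
    exact mem_restrictFam.2 ⟨⟨I, hIF, rfl⟩, hne⟩
  · intro I1 h1 I2 h2 heq
    obtain ⟨h1F, -, h1min⟩ := Finset.mem_filter.1 h1
    obtain ⟨h2F, -, h2min⟩ := Finset.mem_filter.1 h2
    exact le_antisymm (h1min I2 h2F heq.symm) (h2min I1 h1F heq)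
  · intro I' hI'
    obtain ⟨I, hIF, hIM, hmin⟩ := exists_min_preimage hHF hI'
    obtain ⟨-, hne⟩ := mem_restrictFam.1 hI'
    refine ⟨I, Finset.mem_filter.2 ⟨hIF, hIM ▸ hne, ?_⟩, hIM⟩
    intro K hK hKM
    exact hmin K hK (hKM.trans hIM)
  · intro I hI
    obtain ⟨hIF, hne, hmin⟩ := Finset.mem_filter.1 hI
    rw [eta_restrict hHF hHG hM htri hIF hne hmin hJG hJM]

end Batch6

namespace TreeDist
variable {α : Type*} [DecidableEq α]
open Batch2 Batch3 Batch4 Batch5 Batch6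

theorem dNav_recursion (S : Finset α) (hS : 2 ≤ S.card)
    (F G : Finset (Finset α)) (hF : Nondeg S F) (hG : Nondeg S G)
    (SL SR : Finset α) (hne : SL ≠ SR)
    (hch : children G S = {SL, SR}) :
    dNav F G =
      (∑ I ∈ F, theta (((children F I).filter
          fun A => ¬ Compatible A SL ∨ ¬ Compatible A SR).card)) +
      dNav (restrictFam F SL) (restrictFam G SL) +
      dNav (restrictFam F SR) (restrictFam G SR) := by
  obtain ⟨hHF, -⟩ := hF
  obtain ⟨hHG, -⟩ := hG
  have hSL_ch : SL ∈ children G S := by rw [hch]; exact Finset.mem_insert_self _ _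
  have hSR_ch : SR ∈ children G S := by
    rw [hch]; exact Finset.mem_insert_of_mem (Finset.mem_singleton_self _)
  have hSLG : SL ∈ G := child_mem hSL_ch
  have hSRG : SR ∈ G := child_mem hSR_ch
  have hSLS : SL ⊂ S := child_ssubset hSL_ch
  have hSRS : SR ⊂ S := child_ssubset hSR_ch
  have hD : SL ∩ SR = ∅ := children_disjoint hHG hSL_ch hSR_ch hne
  have hD' : SR ∩ SL = ∅ := by rw [Finset.inter_comm]; exact hD
  -- cover
  have hU : SL ∪ SR = S := by
    apply Finset.Subset.antisymm (Finset.union_subset hSLS.subset hSRS.subset)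
    intro i hi
    have hiG : ({i} : Finset α) ∈ G := hHG.2.2.2 i hi
    have hiS : ({i} : Finset α) ⊂ S := by
      refine (Finset.singleton_subset_iff.2 hi).ssubset_of_ne ?_
      intro h
      rw [← h] at hS
      simp at hS
    obtain ⟨A, hA, hiA⟩ := exists_child hHG hiG hHG.2.2.1 hiS
    rw [hch] at hA
    rcases Finset.mem_insert.1 hA with rfl | hA
    · exact Finset.mem_union_left _ (hiA (Finset.mem_singleton_self i))
    · rw [Finset.mem_singleton] at hA
      subst hA
      exact Finset.mem_union_right _ (hiA (Finset.mem_singleton_self i))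
  -- trichotomy
  have htri : ∀ Q ∈ G, Q = S ∨ Q ⊆ SL ∨ Q ⊆ SR := by
    intro Q hQ
    by_cases hQS : Q = S
    · exact Or.inl hQS
    · have hQss : Q ⊂ S := (hHG.1 Q hQ).1.ssubset_of_ne hQS
      obtain ⟨A, hA, hQA⟩ := exists_child hHG hQ hHG.2.2.1 hQss
      rw [hch] at hA
      rcases Finset.mem_insert.1 hA with rfl | hA
      · exact Or.inr (Or.inl hQA)
      · rw [Finset.mem_singleton] at hA
        subst hA
        exact Or.inr (Or.inr hQA)
  have htriL : ∀ Q ∈ G, Q = S ∨ Q ⊆ SL ∨ Q ∩ SL = ∅ := by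
    intro Q hQ
    rcases htri Q hQ with h | h | h
    · exact Or.inl h
    · exact Or.inr (Or.inl h)
    · refine Or.inr (Or.inr (Finset.subset_empty.1 ?_))
      rw [← hD']
      exact Finset.inter_subset_inter h (Finset.Subset.refl _)
  have htriR : ∀ Q ∈ G, Q = S ∨ Q ⊆ SR ∨ Q ∩ SR = ∅ := by
    intro Q hQ
    rcases htri Q hQ with h | h | h
    · exact Or.inl h
    · refine Or.inr (Or.inr (Finset.subset_empty.1 ?_))
      rw [← hD]
      exact Finset.inter_subset_inter h (Finset.Subset.refl _)
    · exact Or.inr (Or.inl h)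
  -- split of G
  have hGeq : G = insert S (G.filter (· ⊆ SL) ∪ G.filter (· ⊆ SR)) := by
    ext Q
    simp only [Finset.mem_insert, Finset.mem_union, Finset.mem_filter]
    constructor
    · intro hQ
      rcases htri Q hQ with h | h | h
      · exact Or.inl h
      · exact Or.inr (Or.inl ⟨hQ, h⟩)
      · exact Or.inr (Or.inr ⟨hQ, h⟩)
    · rintro (rfl | ⟨hQ, -⟩ | ⟨hQ, -⟩)
      · exact hHG.2.2.1
      · exact hQ
      · exact hQ
  have hSnot : S ∉ G.filter (· ⊆ SL) ∪ G.filter (· ⊆ SR) := by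
    simp only [Finset.mem_union, Finset.mem_filter, not_or, not_and]
    exact ⟨fun _ h => hSLS.not_subset h, fun _ h => hSRS.not_subset h⟩
  have hdisjf : Disjoint (G.filter (· ⊆ SL)) (G.filter (· ⊆ SR)) := by
    rw [Finset.disjoint_left]
    intro Q hQL hQR
    obtain ⟨hQG, hL⟩ := Finset.mem_filter.1 hQL
    obtain ⟨-, hR⟩ := Finset.mem_filter.1 hQR
    obtain ⟨x, hx⟩ := (hHG.1 Q hQG).2
    have : x ∈ SL ∩ SR := Finset.mem_inter.2 ⟨hL hx, hR hx⟩
    rw [hD] at this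
    exact absurd this (Finset.notMem_empty x)
  calc dNav F G
      = ∑ J ∈ G, ∑ I ∈ F, theta (eta F G I J) := by rw [dNav]; exact Finset.sum_comm
    _ = (∑ I ∈ F, theta (eta F G I S)) +
        ((∑ J ∈ G.filter (· ⊆ SL), ∑ I ∈ F, theta (eta F G I J)) +
         (∑ J ∈ G.filter (· ⊆ SR), ∑ I ∈ F, theta (eta F G I J))) := by
        have hsum : ∀ g : Finset α → ℚ, ∑ J ∈ G, g J =
            g S + ((∑ J ∈ G.filter (· ⊆ SL), g J) + (∑ J ∈ G.filter (· ⊆ SR), g J)) := by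
          intro g
          conv_lhs => rw [hGeq]
          rw [Finset.sum_insert hSnot, Finset.sum_union hdisjf]
        exact hsum fun J => ∑ I ∈ F, theta (eta F G I J)
    _ = (∑ I ∈ F, theta (((children F I).filter
          fun A => ¬ Compatible A SL ∨ ¬ Compatible A SR).card)) +
        dNav (restrictFam F SL) (restrictFam G SL) +
        dNav (restrictFam F SR) (restrictFam G SR) := by
        rw [sum_part hHF hHG hSLG htriL, sum_part hHF hHG hSRG htriR, ← add_assoc]
        congr 1
        congr 1
        refine Finset.sum_congr rfl fun I hI => ?_
        rw [eta_root hHF hch hU hD hI]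

end TreeDist
end
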